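/- arXiv:2404.13510 — 9 statements merged into one kernel-verified Lean document; each statement's English description precedes it below -/
import Mathlib

section
/- Let (X, ⪯) be a countably infinite totally ordered set. There exists a chaotic bijection f : ℤ → X if and only if X has no isolated points. -/
set_option linter.unusedSectionVars false
set_option linter.unusedVariables false
set_option linter.unnecessarySimpa false
set_option maxHeartbeats 1000000

open Set Topology Filter

section Necessity

variable {X : Type*} [LinearOrder X]

/-- One-sided contradiction: `x` is a minimum with an immediate successor. -/
lemma chaotic_onesided (f : ℤ → X) (hinj : Function.Injective f)
    (hsurj : Function.Surjective f)
    (H : ∀ n d : ℤ, ¬ (f (n - d) < f n ∧ f n < f (n + d)))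
    {x s : X} (hxs : x < s) (hempty : Ioo x s = ∅) (hmin : IsMin x) : False := by
  obtain ⟨b, hb⟩ := hsurj x
  obtain ⟨bs, hbs⟩ := hsurj s
  set m := bs - b with hm_def
  have hbm : b + m = bs := by ring
  have hm : m ≠ 0 := by
    intro h
    rw [h, add_zero] at hbm
    rw [hbm, hbs] at hb
    exact absurd hb (ne_of_gt hxs)
  have h1 : ¬ s < f (b + 2*m) := by
    intro h
    refine H (b + m) m ⟨?_, ?_⟩
    · have e : b + m - m = b := by ring
      rw [e, hb, hbm, hbs]; exact hxs
    · have e : b + m + m = b + 2*m := by ring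
      rw [e, hbm, hbs]; exact h
  have hne_s : f (b + 2*m) ≠ s := by
    rw [← hbs]; intro h
    have := hinj h
    omega
  have hlt_s : f (b + 2*m) < s := lt_of_le_of_ne (not_lt.mp h1) hne_s
  have hne_x : f (b + 2*m) ≠ x := by
    rw [← hb]; intro h
    have := hinj h
    omega
  have hnot : ¬ x < f (b + 2*m) := by
    intro h
    have : f (b + 2*m) ∈ Ioo x s := ⟨h, hlt_s⟩
    rw [hempty] at this
    exact this
  have hfin : f (b + 2*m) < x := lt_of_le_of_ne (not_lt.mp hnot) hne_x
  exact absurd (hmin (le_of_lt hfin)) (not_le.mpr hfin)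

/-- Interior contradiction: `x` has an immediate predecessor and an immediate successor. -/
lemma chaotic_interior (f : ℤ → X) (hinj : Function.Injective f)
    (hsurj : Function.Surjective f)
    (H : ∀ n d : ℤ, ¬ (f (n - d) < f n ∧ f n < f (n + d)))
    {x s p : X} (hxs : x < s) (hempty : Ioo x s = ∅)
    (hpx : p < x) (hempty' : Ioo p x = ∅) : False := by
  obtain ⟨b, hb⟩ := hsurj x
  obtain ⟨bs, hbs⟩ := hsurj s
  obtain ⟨bp, hbp⟩ := hsurj p
  set m := bs - b with hm_def
  set m' := bp - b with hm'_def
  have hbm : b + m = bs := by ring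
  have hbm' : b + m' = bp := by ring
  have hm : m ≠ 0 := by
    intro h; rw [h, add_zero] at hbm; rw [hbm, hbs] at hb
    exact absurd hb (ne_of_gt hxs)
  have hm' : m' ≠ 0 := by
    intro h; rw [h, add_zero] at hbm'; rw [hbm', hbp] at hb
    exact absurd hb (ne_of_lt hpx)
  have trich : ∀ j : ℤ, j ≠ 0 → f (b + j) < x ∨ x < f (b + j) := by
    intro j hj
    rcases lt_trichotomy (f (b + j)) x with h | h | h
    · exact Or.inl h
    · exfalso; rw [← hb] at h; have := hinj h; omega
    · exact Or.inr h
  -- symmetry for the low side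
  have low_neg : ∀ j : ℤ, j ≠ 0 → f (b + j) < x → f (b - j) < x := by
    intro j hj hlow
    rcases trich (-j) (by omega) with h2 | h2
    · have e : b + -j = b - j := by ring
      rwa [e] at h2
    · exfalso
      refine H b (-j) ⟨?_, ?_⟩
      · have e : b - -j = b + j := by ring
        rw [e, hb]; exact hlow
      · have e : b + -j = b - j := by ring
        rw [e, hb]
        have e2 : b + -j = b - j := by ring
        rw [e2] at h2; exact h2
  have high_neg : ∀ j : ℤ, j ≠ 0 → x < f (b + j) → x < f (b - j) := by
    intro j hj hhigh
    rcases trich (-j) (by omega) with h2 | h2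
    · exfalso
      refine H b j ⟨?_, ?_⟩
      · have e : b - j = b + -j := by ring
        rw [e, hb]; exact h2
      · rw [hb]; exact hhigh
    · have e : b + -j = b - j := by ring
      rwa [e] at h2
  -- low propagation step
  have low_step : ∀ j : ℤ, j ≠ 0 → 2*m - j ≠ 0 → f (b + j) < x → f (b + (2*m - j)) < x := by
    intro j hj h2mj hlow
    have hjm : j ≠ m := by
      intro h
      rw [h, hbm, hbs] at hlow
      exact absurd hlow (not_lt.mpr (le_of_lt hxs))
    rcases trich (2*m - j) h2mj with h | h
    · exact h
    · exfalso
      have hges : s ≤ f (b + (2*m - j)) := by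
        by_contra hc
        push_neg at hc
        have : f (b + (2*m - j)) ∈ Ioo x s := ⟨h, hc⟩
        rw [hempty] at this; exact this
      have hnes : f (b + (2*m - j)) ≠ s := by
        rw [← hbs]; intro hcc
        have := hinj hcc
        omega
      refine H (b + m) (m - j) ⟨?_, ?_⟩
      · have e : b + m - (m - j) = b + j := by ring
        rw [e, hbm, hbs]
        exact lt_trans hlow hxs
      · have e : b + m + (m - j) = b + (2*m - j) := by ring
        rw [e, hbm, hbs]
        exact lt_of_le_of_ne hges (Ne.symm hnes)
  -- high propagation step (dual)
  have high_step : ∀ j : ℤ, j ≠ 0 → 2*m' - j ≠ 0 → x < f (b + j) → x < f (b + (2*m' - j)) := by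
    intro j hj h2mj hhigh
    have hjm : j ≠ m' := by
      intro h
      rw [h, hbm', hbp] at hhigh
      exact absurd hhigh (not_lt.mpr (le_of_lt hpx))
    rcases trich (2*m' - j) h2mj with h | h
    swap
    · exact h
    · exfalso
      have hlep : f (b + (2*m' - j)) ≤ p := by
        by_contra hc
        push_neg at hc
        have : f (b + (2*m' - j)) ∈ Ioo p x := ⟨hc, h⟩
        rw [hempty'] at this; exact this
      have hnep : f (b + (2*m' - j)) ≠ p := by
        rw [← hbp]; intro hcc
        have := hinj hcc
        omega
      refine H (b + m') (j - m') ⟨?_, ?_⟩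
      · have e : b + m' - (j - m') = b + (2*m' - j) := by ring
        rw [e, hbm', hbp]
        exact lt_of_le_of_ne hlep hnep
      · have e : b + m' + (j - m') = b + j := by ring
        rw [e, hbm', hbp]
        exact lt_trans hpx hhigh
  -- base cases
  have low_base : f (b + 2*m) < x := by
    have h1 : ¬ s < f (b + 2*m) := by
      intro h
      refine H (b + m) m ⟨?_, ?_⟩
      · have e : b + m - m = b := by ring
        rw [e, hb, hbm, hbs]; exact hxs
      · have e : b + m + m = b + 2*m := by ring
        rw [e, hbm, hbs]; exact h
    have hne_s : f (b + 2*m) ≠ s := by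
      rw [← hbs]; intro h; have := hinj h; omega
    have hlt_s : f (b + 2*m) < s := lt_of_le_of_ne (not_lt.mp h1) hne_s
    rcases trich (2*m) (by omega) with h | h
    · exact h
    · exfalso
      have : f (b + 2*m) ∈ Ioo x s := ⟨h, hlt_s⟩
      rw [hempty] at this; exact this
  have high_base : x < f (b + 2*m') := by
    have h1 : ¬ f (b + 2*m') < p := by
      intro h
      refine H (b + m') (-m') ⟨?_, ?_⟩
      · have e : b + m' - -m' = b + 2*m' := by ring
        rw [e, hbm', hbp]; exact h
      · have e : b + m' + -m' = b := by ring
        rw [e, hb, hbm', hbp]; exact hpx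
    have hne_p : f (b + 2*m') ≠ p := by
      rw [← hbp]; intro h; have := hinj h; omega
    have hgt_p : p < f (b + 2*m') := lt_of_le_of_ne (not_lt.mp h1) (Ne.symm hne_p)
    rcases trich (2*m') (by omega) with h | h
    · exfalso
      have : f (b + 2*m') ∈ Ioo p x := ⟨hgt_p, h⟩
      rw [hempty'] at this; exact this
    · exact h
  -- full induction on both sides
  have lowAll : ∀ k : ℕ, 1 ≤ k → f (b + 2*(k:ℤ)*m) < x := by
    intro k hk
    induction k, hk using Nat.le_induction with
    | base =>
        have e : b + 2*((1:ℕ):ℤ)*m = b + 2*m := by push_cast; ring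
        rw [e]; exact low_base
    | succ n hn ih =>
        have hn0 : (2*(n:ℤ))*m ≠ 0 := mul_ne_zero (by omega) hm
        have h1 : f (b - 2*(n:ℤ)*m) < x := low_neg _ hn0 ih
        have h2 := low_step (-(2*(n:ℤ)*m)) (by simpa using hn0)
          (by
            have e : 2*m - -(2*(n:ℤ)*m) = (2*((n:ℤ)+1))*m := by ring
            rw [e]
            exact mul_ne_zero (by omega) hm)
          (by
            have e : b + -(2*(n:ℤ)*m) = b - 2*(n:ℤ)*m := by ring
            rw [e]; exact h1)
        have e : b + (2*m - -(2*(n:ℤ)*m)) = b + 2*(((n+1):ℕ):ℤ)*m := by push_cast; ring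
        rw [e] at h2; exact h2
  have highAll : ∀ k : ℕ, 1 ≤ k → x < f (b + 2*(k:ℤ)*m') := by
    intro k hk
    induction k, hk using Nat.le_induction with
    | base =>
        have e : b + 2*((1:ℕ):ℤ)*m' = b + 2*m' := by push_cast; ring
        rw [e]; exact high_base
    | succ n hn ih =>
        have hn0 : (2*(n:ℤ))*m' ≠ 0 := mul_ne_zero (by omega) hm'
        have h1 : x < f (b - 2*(n:ℤ)*m') := high_neg _ hn0 ih
        have h2 := high_step (-(2*(n:ℤ)*m')) (by simpa using hn0)
          (by
            have e : 2*m' - -(2*(n:ℤ)*m') = (2*((n:ℤ)+1))*m' := by ring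
            rw [e]
            exact mul_ne_zero (by omega) hm')
          (by
            have e : b + -(2*(n:ℤ)*m') = b - 2*(n:ℤ)*m' := by ring
            rw [e]; exact h1)
        have e : b + (2*m' - -(2*(n:ℤ)*m')) = b + 2*(((n+1):ℕ):ℤ)*m' := by push_cast; ring
        rw [e] at h2; exact h2
  -- the final contradiction at position 2*|m'|*m = ±2*|m|*m'
  have hA1 : 1 ≤ m'.natAbs := by omega
  have hB1 : 1 ≤ m.natAbs := by omega
  have low1 : f (b + 2*((m'.natAbs : ℕ):ℤ)*m) < x := lowAll m'.natAbs hA1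
  have high1 : x < f (b + 2*((m.natAbs : ℕ):ℤ)*m') := highAll m.natAbs hB1
  have hL0 : (2*((m'.natAbs:ℕ):ℤ))*m ≠ 0 := mul_ne_zero (by omega) hm
  have low2 : f (b - 2*((m'.natAbs : ℕ):ℤ)*m) < x := low_neg _ hL0 low1
  rcases (by omega : ((m'.natAbs:ℤ) = m' ∨ (m'.natAbs:ℤ) = -m')) with hA | hA <;>
  rcases (by omega : ((m.natAbs:ℤ) = m ∨ (m.natAbs:ℤ) = -m)) with hB | hB
  · have e : b + 2*((m.natAbs:ℕ):ℤ)*m' = b + 2*((m'.natAbs:ℕ):ℤ)*m := by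
      rw [hA, hB]; ring
    rw [e] at high1
    exact lt_irrefl x (lt_trans high1 low1)
  · have e : b + 2*((m.natAbs:ℕ):ℤ)*m' = b - 2*((m'.natAbs:ℕ):ℤ)*m := by
      rw [hA, hB]; ring
    rw [e] at high1
    exact lt_irrefl x (lt_trans high1 low2)
  · have e : b + 2*((m.natAbs:ℕ):ℤ)*m' = b - 2*((m'.natAbs:ℕ):ℤ)*m := by
      rw [hA, hB]; ring
    rw [e] at high1
    exact lt_irrefl x (lt_trans high1 low2)
  · have e : b + 2*((m.natAbs:ℕ):ℤ)*m' = b + 2*((m'.natAbs:ℕ):ℤ)*m := by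
      rw [hA, hB]; ring
    rw [e] at high1
    exact lt_irrefl x (lt_trans high1 low1)

end Necessity


section Sufficiency

variable {X : Type*} [LinearOrder X] [TopologicalSpace X] [OrderTopology X]

/-- If `x` has an immediate successor, then (no isolated points) `x` is a limit from below
and is not minimal. -/
lemma limit_below (hni : ∀ x : X, ¬ IsOpen ({x} : Set X)) {x u : X} (hxu : x < u)
    (hem : Ioo x u = ∅) : (¬ IsMin x) ∧ ∀ p, p < x → (Ioo p x).Nonempty := by
  constructor
  · intro hmin
    apply hni x
    have : ({x} : Set X) = Iio u := by
      ext z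
      simp only [mem_singleton_iff, mem_Iio]
      constructor
      · rintro rfl; exact hxu
      · intro hz
        rcases lt_trichotomy z x with h | h | h
        · exact absurd (hmin (le_of_lt h)) (not_le.mpr h)
        · exact h
        · exact absurd (show z ∈ Ioo x u from ⟨h, hz⟩) (by rw [hem]; exact fun h => h)
    rw [this]; exact isOpen_Iio
  · intro p hpx
    by_contra hc
    rw [Set.not_nonempty_iff_eq_empty] at hc
    apply hni x
    have : ({x} : Set X) = Ioo p u := by
      ext z
      simp only [mem_singleton_iff, mem_Ioo]
      constructor
      · rintro rfl; exact ⟨hpx, hxu⟩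
      · rintro ⟨h1, h2⟩
        rcases lt_trichotomy z x with h | h | h
        · exact absurd (show z ∈ Ioo p x from ⟨h1, h⟩) (by rw [hc]; exact fun h => h)
        · exact h
        · exact absurd (show z ∈ Ioo x u from ⟨h, h2⟩) (by rw [hem]; exact fun h => h)
    rw [this]; exact isOpen_Ioo

/-- Dual of `limit_below`. -/
lemma limit_above (hni : ∀ x : X, ¬ IsOpen ({x} : Set X)) {x p : X} (hpx : p < x)
    (hem : Ioo p x = ∅) : (¬ IsMax x) ∧ ∀ u, x < u → (Ioo x u).Nonempty := by
  constructor
  · intro hmax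
    apply hni x
    have : ({x} : Set X) = Ioi p := by
      ext z
      simp only [mem_singleton_iff, mem_Ioi]
      constructor
      · rintro rfl; exact hpx
      · intro hz
        rcases lt_trichotomy z x with h | h | h
        · exact absurd (show z ∈ Ioo p x from ⟨hz, h⟩) (by rw [hem]; exact fun h => h)
        · exact h
        · exact absurd (hmax (le_of_lt h)) (not_le.mpr h)
    rw [this]; exact isOpen_Ioi
  · intro u hxu
    by_contra hc
    rw [Set.not_nonempty_iff_eq_empty] at hc
    exact (limit_below hni hxu hc).2 p hpx |>.ne_empty hem

/-- A "good" set: infinite, convex, and with good (limit-like) ends. -/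
structure GoodSet (P : Set X) : Prop where
  inf : P.Infinite
  conv : ∀ ⦃a⦄, a ∈ P → ∀ ⦃b⦄, b ∈ P → ∀ ⦃c⦄, a ≤ c → c ≤ b → c ∈ P
  bg : ∀ ⦃z⦄, z ∈ P → (∀ w ∈ P, ¬ w < z) → ∀ ⦃u⦄, u ∈ P → z < u → (Ioo z u).Nonempty
  tg : ∀ ⦃z⦄, z ∈ P → (∀ w ∈ P, ¬ z < w) → ∀ ⦃u⦄, u ∈ P → u < z → (Ioo u z).Nonempty

lemma GoodSet.below_infinite {P : Set X} (hP : GoodSet P) {z : X} (hz : z ∈ P)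
    (hex : ∃ w ∈ P, w < z) : (P ∩ Iio z).Infinite := by
  by_contra hfin
  rw [Set.not_infinite] at hfin
  obtain ⟨w0, hw0P, hw0⟩ := hex
  have hne : (P ∩ Iio z).Nonempty := ⟨w0, hw0P, hw0⟩
  obtain ⟨m, hm, hmin⟩ := Set.exists_min_image _ id hfin hne
  have hminP : ∀ w ∈ P, ¬ w < m := by
    intro w hw hlt
    have : w ∈ P ∩ Iio z := ⟨hw, lt_trans hlt hm.2⟩
    exact absurd (hmin w this) (not_le.mpr hlt)
  obtain ⟨w, hw⟩ := hP.bg hm.1 hminP hz hm.2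
  have hwP : w ∈ P := hP.conv hm.1 hz (le_of_lt hw.1) (le_of_lt hw.2)
  have hwS : w ∈ P ∩ Iio z := ⟨hwP, hw.2⟩
  -- now the set S \ {m} is nonempty; take its min
  have hne2 : ((P ∩ Iio z) \ {m}).Nonempty := ⟨w, hwS, by simp [ne_of_gt hw.1]⟩
  obtain ⟨m2, hm2, hmin2⟩ := Set.exists_min_image _ id hfin.diff hne2
  have hm2m : m < m2 :=
    lt_of_le_of_ne (hmin m2 hm2.1) (by simpa [eq_comm] using hm2.2)
  obtain ⟨w', hw'⟩ := hP.bg hm.1 hminP (hm2.1).1 hm2m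
  have hw'P : w' ∈ P := hP.conv hm.1 hm2.1.1 (le_of_lt hw'.1) (le_of_lt hw'.2)
  have hw'S : w' ∈ (P ∩ Iio z) \ {m} :=
    ⟨⟨hw'P, lt_trans hw'.2 hm2.1.2⟩, by simp [ne_of_gt hw'.1]⟩
  exact absurd (hmin2 w' hw'S) (not_le.mpr hw'.2)

lemma GoodSet.above_infinite {P : Set X} (hP : GoodSet P) {z : X} (hz : z ∈ P)
    (hex : ∃ w ∈ P, z < w) : (P ∩ Ioi z).Infinite := by
  by_contra hfin
  rw [Set.not_infinite] at hfin
  obtain ⟨w0, hw0P, hw0⟩ := hex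
  have hne : (P ∩ Ioi z).Nonempty := ⟨w0, hw0P, hw0⟩
  obtain ⟨m, hm, hmin⟩ := Set.exists_min_image _ (fun a => OrderDual.toDual a) hfin hne
  simp only [OrderDual.toDual_le_toDual] at hmin
  have hmaxP : ∀ w ∈ P, ¬ m < w := by
    intro w hw hlt
    have : w ∈ P ∩ Ioi z := ⟨hw, lt_trans hm.2 hlt⟩
    exact absurd (hmin w this) (not_le.mpr hlt)
  obtain ⟨w, hw⟩ := hP.tg hm.1 hmaxP hz hm.2
  have hwP : w ∈ P := hP.conv hz hm.1 (le_of_lt hw.1) (le_of_lt hw.2)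
  have hwS : w ∈ P ∩ Ioi z := ⟨hwP, hw.1⟩
  have hne2 : ((P ∩ Ioi z) \ {m}).Nonempty := ⟨w, hwS, by simp [ne_of_lt hw.2]⟩
  obtain ⟨m2, hm2, hmin2⟩ := Set.exists_min_image _ (fun a => OrderDual.toDual a) hfin.diff hne2
  simp only [OrderDual.toDual_le_toDual] at hmin2
  have hm2m : m2 < m :=
    lt_of_le_of_ne (hmin m2 hm2.1) (by simpa using hm2.2)
  obtain ⟨w', hw'⟩ := hP.tg hm.1 hmaxP (hm2.1).1 hm2m
  have hw'P : w' ∈ P := hP.conv hm2.1.1 hm.1 (le_of_lt hw'.1) (le_of_lt hw'.2)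
  have hw'S : w' ∈ (P ∩ Ioi z) \ {m} :=
    ⟨⟨hw'P, lt_trans hm2.1.2 hw'.1⟩, by simp [ne_of_lt hw'.2]⟩
  exact absurd (hmin2 w' hw'S) (not_le.mpr hw'.1)

end Sufficiency

section CutPart
variable {X : Type*} [LinearOrder X] [TopologicalSpace X] [OrderTopology X]

lemma cut_exists (hni : ∀ x : X, ¬ IsOpen ({x} : Set X))
    {P : Set X} (hP : GoodSet P) {x y : X} (hx : x ∈ P) (hy : y ∈ P) (hxy : x < y) :
    ∃ c, c ∈ P ∧ x < c ∧ c ≤ y ∧ GoodSet (P ∩ Iio c) ∧ GoodSet (P ∩ Ici c) := by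
  -- auxiliary: if some z < y in P has empty (z,y), then y is not a max of P
  have haboveY : ∀ z ∈ P, z < y → Ioo z y = ∅ → ∃ v ∈ P, y < v := by
    intro z hzP hzy hem
    by_contra hc
    push_neg at hc
    have hmax : ∀ w ∈ P, ¬ y < w := fun w hw hlt => absurd hlt (not_lt.mpr (hc w hw))
    obtain ⟨w, hw⟩ := hP.tg hy hmax hzP hzy
    exact (Set.eq_empty_iff_forall_notMem.mp hem) w hw
  -- find the cut point c
  obtain ⟨c, hcP, hxc, hcy, lima, habove⟩ :
      ∃ c, c ∈ P ∧ x < c ∧ c ≤ y ∧ (∀ u, c < u → (Ioo c u).Nonempty) ∧ ∃ v ∈ P, c < v := by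
    rcases eq_empty_or_nonempty (Ioo x y) with hem | ⟨z, hz⟩
    · exact ⟨y, hy, hxy, le_refl y, (limit_above hni hxy hem).2,
        haboveY x hx hxy hem⟩
    · have hzP : z ∈ P := hP.conv hx hy (le_of_lt hz.1) (le_of_lt hz.2)
      by_cases hza : ∀ u, z < u → (Ioo z u).Nonempty
      · exact ⟨z, hzP, hz.1, le_of_lt hz.2, hza, ⟨y, hy, hz.2⟩⟩
      · push_neg at hza
        obtain ⟨u, hzu, hem⟩ := hza
        have huy : u ≤ y := by
          by_contra hc
          push_neg at hc
          exact (Set.eq_empty_iff_forall_notMem.mp hem) y ⟨hz.2, hc⟩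
        have huP : u ∈ P := hP.conv hzP hy (le_of_lt hzu) huy
        refine ⟨u, huP, lt_trans hz.1 hzu, huy, (limit_above hni hzu hem).2, ?_⟩
        rcases lt_or_eq_of_le huy with h | h
        · exact ⟨y, hy, h⟩
        · subst h
          exact haboveY z hzP hzu hem
  -- now build the two good halves
  have hconvA : ∀ ⦃a⦄, a ∈ P ∩ Iio c → ∀ ⦃b⦄, b ∈ P ∩ Iio c → ∀ ⦃w⦄, a ≤ w → w ≤ b →
      w ∈ P ∩ Iio c := by
    intro a ha b hb w haw hwb
    exact ⟨hP.conv ha.1 hb.1 haw hwb, lt_of_le_of_lt hwb hb.2⟩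
  have hconvB : ∀ ⦃a⦄, a ∈ P ∩ Ici c → ∀ ⦃b⦄, b ∈ P ∩ Ici c → ∀ ⦃w⦄, a ≤ w → w ≤ b →
      w ∈ P ∩ Ici c := by
    intro a ha b hb w haw hwb
    exact ⟨hP.conv ha.1 hb.1 haw hwb, le_trans ha.2 haw⟩
  refine ⟨c, hcP, hxc, hcy, ?_, ?_⟩
  · refine ⟨hP.below_infinite hcP ⟨x, hx, hxc⟩, hconvA, ?_, ?_⟩
    · -- bottom-good of A: a least element of A is a least element of P
      intro z hz hleast u hu hzu
      have : ∀ w ∈ P, ¬ w < z := by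
        intro w hw hlt
        exact hleast w ⟨hw, lt_trans hlt hz.2⟩ hlt
      exact hP.bg hz.1 this hu.1 hzu
    · -- top-good of A
      intro z hz hgreat u hu huz
      rcases eq_empty_or_nonempty (Ioo z c) with hem | ⟨v, hv⟩
      · exact (limit_below hni hz.2 hem).2 u huz
      · exfalso
        have hvP : v ∈ P := hP.conv hz.1 hcP (le_of_lt hv.1) (le_of_lt hv.2)
        exact hgreat v ⟨hvP, hv.2⟩ hv.1
  · refine ⟨?_, hconvB, ?_, ?_⟩
    · obtain ⟨v, hvP, hcv⟩ := habove
      have := hP.above_infinite hcP ⟨v, hvP, hcv⟩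
      apply Set.Infinite.mono ?_ this
      intro w hw
      exact ⟨hw.1, le_of_lt hw.2⟩
    · -- bottom-good of B: the least element of B is c itself, which is a limit from above
      intro z hz hleast u hu hzu
      have hzc : z = c := le_antisymm (not_lt.mp (hleast c ⟨hcP, le_refl c⟩)) hz.2
      subst hzc
      exact lima u hzu
    · -- top-good of B: a greatest element of B is a greatest element of P
      intro z hz hgreat u hu huz
      have : ∀ w ∈ P, ¬ z < w := by
        intro w hw hlt
        exact hgreat w ⟨hw, le_trans hz.2 (le_of_lt hlt)⟩ hlt
      exact hP.tg hz.1 this hu.1 huz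

end CutPart

section Construction

variable {X : Type*} [LinearOrder X] [TopologicalSpace X] [OrderTopology X]

/-- helper: if `m ∣ a - c` and `m ∣ b - c` but `2m` divides neither, then `2m ∣ a - b`. -/
lemma two_dvd_helper {m a b c : ℤ} (hm : m ≠ 0) (hac : m ∣ a - c) (hbc : m ∣ b - c)
    (h1 : ¬ 2*m ∣ a - c) (h2 : ¬ 2*m ∣ b - c) : 2*m ∣ a - b := by
  obtain ⟨s, hs⟩ := hac
  obtain ⟨t, ht⟩ := hbc
  have hso : ¬ 2 ∣ s := fun ⟨s', hs'⟩ => h1 ⟨s', by rw [hs, hs']; ring⟩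
  have hto : ¬ 2 ∣ t := fun ⟨t', ht'⟩ => h2 ⟨t', by rw [ht, ht']; ring⟩
  obtain ⟨u, hu⟩ : 2 ∣ s - t := by omega
  refine ⟨u, ?_⟩
  calc a - b = (a - c) - (b - c) := by ring
    _ = m*s - m*t := by rw [← hs, ← ht]
    _ = m*(s-t) := by ring
    _ = m*(2*u) := by rw [hu]
    _ = 2*m*u := by ring

lemma emod_sub_dvd (q n : ℤ) : n ∣ (q % n - q) := by
  have h := Int.mul_ediv_add_emod q n
  exact ⟨-(q / n), by linarith⟩

structure Stage (X : Type*) where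
  D : ℤ → Set X
  A : ℤ → ℤ × X

def IsAnchoredPos (S : Stage X) (p : ℤ) : Prop := (S.A p).1 = p

def IsAnchoredVal (S : Stage X) (x : X) : Prop := ∃ q, (S.A q).2 = x

structure StageOK (k : ℕ) (S : Stage X) : Prop where
  const : ∀ q q' : ℤ, (2^k : ℤ) ∣ (q - q') → S.D q = S.D q' ∧ S.A q = S.A q'
  disj : ∀ (q q' : ℤ) (x : X), x ∈ S.D q → x ∈ S.D q' → (2^k : ℤ) ∣ (q - q')
  cover : ∀ x : X, ∃ q, x ∈ S.D q
  good : ∀ q, GoodSet (S.D q)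
  anch1 : ∀ q, (2^k : ℤ) ∣ ((S.A q).1 - q)
  anch2 : ∀ q, (S.A q).2 ∈ S.D q

def IsPriority (e : ℕ ≃ X) (S : Stage X) (x : X) : Prop :=
  ¬ IsAnchoredVal S x ∧ ∀ y : X, ¬ IsAnchoredVal S y → e.symm x ≤ e.symm y

structure STrans (e : ℕ ≃ X) (ι : ℕ ≃ ℤ) (k : ℕ) (S S' : Stage X) : Prop where
  sub : ∀ q, S'.D q ⊆ S.D q
  sep : ∀ q, (∀ u ∈ S'.D q, ∀ v ∈ S'.D (q + 2^k), u < v) ∨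
        (∀ u ∈ S'.D q, ∀ v ∈ S'.D (q + 2^k), v < u)
  keep : ∀ q, ((2^(k+1) : ℤ) ∣ ((S.A q).1 - q)) → S'.A q = S.A q
  pv : ∀ x, IsPriority e S x → ∃ p, S'.A p = (p, x)
  pp : ∀ p, ¬ IsAnchoredPos S p → ¬ ((2^(k+1):ℤ) ∣ ((S.A p).1 - p)) →
      (∀ p', ((2^(k+1):ℤ) ∣ (p' - p)) → ¬ IsAnchoredPos S p' → ι.symm p ≤ ι.symm p') →
      (S'.A p).1 = p

/-- The range of `S.A` is finite (it only depends on residues mod `2^k`). -/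
lemma range_A_finite (k : ℕ) (S : Stage X) (hS : StageOK k S) :
    (Set.range S.A).Finite := by
  have h2k : (0:ℤ) < 2^k := by positivity
  apply Set.Finite.subset ((Set.finite_Icc (0:ℤ) (2^k)).image S.A)
  rintro _ ⟨q, rfl⟩
  refine ⟨q % 2^k, ⟨Int.emod_nonneg q (ne_of_gt h2k), le_of_lt (Int.emod_lt_of_pos q h2k)⟩, ?_⟩
  exact (hS.const (q % 2^k) q (emod_sub_dvd q _)).2

lemma anchored_val_finite (k : ℕ) (S : Stage X) (hS : StageOK k S) :
    {x : X | IsAnchoredVal S x}.Finite := by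
  apply Set.Finite.subset ((range_A_finite k S hS).image Prod.snd)
  rintro x ⟨q, rfl⟩
  exact ⟨S.A q, ⟨q, rfl⟩, rfl⟩

end Construction

section StepLemma

variable {X : Type*} [LinearOrder X] [TopologicalSpace X] [OrderTopology X]

lemma emod_eq_of_dvd {n a b : ℤ} (h : n ∣ a - b) : a % n = b % n := by
  have h2 : b ≡ a [ZMOD n] := Int.modEq_iff_dvd.mpr h
  exact h2.symm

lemma step_ex [Infinite X] (hni : ∀ x : X, ¬ IsOpen ({x} : Set X)) (e : ℕ ≃ X) (ι : ℕ ≃ ℤ)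
    (k : ℕ) (S : Stage X) (hS : StageOK k S) :
    ∃ S' : Stage X, StageOK (k+1) S' ∧ STrans e ι k S S' := by
  classical
  have h2k : (0:ℤ) < 2^k := by positivity
  have h2k1 : (2:ℤ)^(k+1) = 2 * 2^k := by ring
  have hdvd21 : (2:ℤ)^k ∣ 2^(k+1) := ⟨2, by ring⟩
  have hnd : ¬ ((2:ℤ)^(k+1) ∣ 2^k) := by
    intro h
    have := Int.le_of_dvd h2k h
    have : (2:ℤ)^(k+1) ≤ 2^k := this
    nlinarith [h2k]
  -- priority value
  have hex : ∃ n : ℕ, ¬ IsAnchoredVal S (e n) := by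
    obtain ⟨x, hx⟩ := ((Set.infinite_univ (α := X)).diff (anchored_val_finite k S hS)).nonempty
    exact ⟨e.symm x, by simpa using hx.2⟩
  set xstar := e (Nat.find hex) with hxstar
  have hxstar_un : ¬ IsAnchoredVal S xstar := Nat.find_spec hex
  have hxstar_pri : IsPriority e S xstar := by
    refine ⟨hxstar_un, fun y hy => ?_⟩
    have h1 : Nat.find hex ≤ e.symm y := Nat.find_le (by simpa using hy)
    simpa [hxstar] using h1
  -- per-piece split
  have hspec : ∀ w : ℤ, ∃ (AP OP : Set X) (nv : X),
      GoodSet AP ∧ GoodSet OP ∧ AP ⊆ S.D w ∧ OP ⊆ S.D w ∧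
      (∀ x ∈ S.D w, x ∈ AP ∨ x ∈ OP) ∧ (∀ x, ¬ (x ∈ AP ∧ x ∈ OP)) ∧
      ((∀ u ∈ AP, ∀ v ∈ OP, u < v) ∨ (∀ u ∈ AP, ∀ v ∈ OP, v < u)) ∧
      (S.A w).2 ∈ AP ∧ nv ∈ OP ∧ (xstar ∈ S.D w → nv = xstar) := by
    intro w
    have hxaP : (S.A w).2 ∈ S.D w := hS.anch2 w
    set xa := (S.A w).2 with hxa_def
    have hgood := hS.good w
    obtain ⟨z0, hz0P, hz0ne, hz0star⟩ :
        ∃ z0, z0 ∈ S.D w ∧ z0 ≠ xa ∧ (xstar ∈ S.D w → z0 = xstar) := by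
      by_cases hx : xstar ∈ S.D w
      · exact ⟨xstar, hx, fun h => hxstar_un ⟨w, h.symm⟩, fun _ => rfl⟩
      · obtain ⟨z, hz⟩ := (hgood.inf.diff (Set.finite_singleton xa)).nonempty
        exact ⟨z, hz.1, by simpa using hz.2, fun h => absurd h hx⟩
    have hlohi : min xa z0 < max xa z0 := min_lt_max.mpr (Ne.symm hz0ne)
    have hloP : min xa z0 ∈ S.D w := by
      rcases min_choice xa z0 with h | h <;> rw [h] <;> assumption
    have hhiP : max xa z0 ∈ S.D w := by
      rcases max_choice xa z0 with h | h <;> rw [h] <;> assumption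
    obtain ⟨c, hcP, hlc, hchi, hGA, hGB⟩ := cut_exists hni hgood hloP hhiP hlohi
    rcases lt_or_ge xa c with hxac | hcxa
    · -- anchor below the cut
      refine ⟨S.D w ∩ Iio c, S.D w ∩ Ici c, z0, hGA, hGB, fun x hx => hx.1, fun x hx => hx.1,
        ?_, ?_, ?_, ⟨hxaP, hxac⟩, ⟨hz0P, ?_⟩, hz0star⟩
      · intro x hx
        rcases lt_or_ge x c with h | h
        · exact Or.inl ⟨hx, h⟩
        · exact Or.inr ⟨hx, h⟩
      · rintro x ⟨⟨-, h1⟩, ⟨-, h2⟩⟩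
        exact absurd (lt_of_lt_of_le h1 (le_refl c)) (not_lt.mpr h2)
      · exact Or.inl (fun u hu v hv => lt_of_lt_of_le hu.2 hv.2)
      · -- z0 ≥ c
        have hhi : max xa z0 = z0 := by
          rcases max_choice xa z0 with h | h
          · exfalso
            rw [h] at hchi
            exact absurd (lt_of_lt_of_le hxac hchi) (lt_irrefl xa)
          · exact h
        rw [← hhi]; exact hchi
    · -- anchor at or above the cut
      refine ⟨S.D w ∩ Ici c, S.D w ∩ Iio c, z0, hGB, hGA, fun x hx => hx.1, fun x hx => hx.1,
        ?_, ?_, ?_, ⟨hxaP, hcxa⟩, ⟨hz0P, ?_⟩, hz0star⟩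
      · intro x hx
        rcases lt_or_ge x c with h | h
        · exact Or.inr ⟨hx, h⟩
        · exact Or.inl ⟨hx, h⟩
      · rintro x ⟨⟨-, h1⟩, ⟨-, h2⟩⟩
        exact absurd (lt_of_lt_of_le h2 h1) (lt_irrefl x)
      · exact Or.inr (fun u hu v hv => lt_of_lt_of_le hv.2 hu.2)
      · -- z0 < c
        have hlo : min xa z0 = z0 := by
          rcases min_choice xa z0 with h | h
          · exfalso
            rw [h] at hlc
            exact absurd (lt_of_lt_of_le hlc hcxa) (lt_irrefl xa)
          · exact h
        rw [← hlo]; exact hlc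
  choose FA FO Fnv hG1 hG2 hsub1 hsub2 hcov' hdisj' hsep' hanch' hnv' hnvstar' using hspec
  -- residue bookkeeping
  have hAρ : ∀ q : ℤ, S.A (q % 2^k) = S.A q :=
    fun q => (hS.const (q % 2^k) q (emod_sub_dvd q _)).2
  have hDρ : ∀ q : ℤ, S.D (q % 2^k) = S.D q :=
    fun q => (hS.const (q % 2^k) q (emod_sub_dvd q _)).1
  have hprq : ∀ q : ℤ, (2^k : ℤ) ∣ ((S.A (q % 2^k)).1 - q) := by
    intro q
    have h1 := hS.anch1 (q % 2^k)
    have h2 := emod_sub_dvd q ((2:ℤ)^k)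
    have := dvd_add h1 h2
    simpa using this
  -- the "other residue" target
  set τ : ℤ → ℤ := fun w => if (2^(k+1) : ℤ) ∣ ((S.A w).1 - w) then w + 2^k else w with hτ_def
  have hτw : ∀ w, (2^k:ℤ) ∣ (τ w - w) := by
    intro w
    by_cases h : (2^(k+1) : ℤ) ∣ ((S.A w).1 - w)
    · rw [hτ_def]; simp only [if_pos h]; exact ⟨1, by ring⟩
    · rw [hτ_def]; simp only [if_neg h]; exact ⟨0, by ring⟩
  have hτpr : ∀ w, ¬ ((2:ℤ)^(k+1) ∣ (τ w - (S.A w).1)) := by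
    intro w h
    by_cases hc : (2^(k+1) : ℤ) ∣ ((S.A w).1 - w)
    · rw [hτ_def] at h; simp only [if_pos hc] at h
      have : (2:ℤ)^(k+1) ∣ (w + 2^k - (S.A w).1) + ((S.A w).1 - w) := dvd_add h hc
      simpa using absurd (by simpa using this) hnd
    · rw [hτ_def] at h; simp only [if_neg hc] at h
      apply hc
      have := dvd_neg.mpr h
      simpa using this
  -- new anchor position chooser
  have hQ : ∀ w : ℤ, ∃ n : ℕ, ((2^(k+1):ℤ) ∣ (ι n - τ w)) ∧ ¬ IsAnchoredPos S (ι n) := by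
    intro w
    refine ⟨ι.symm (τ w), by simp, ?_⟩
    intro hanch
    have hAeq : S.A (τ w) = S.A w := (hS.const (τ w) w (hτw w)).2
    unfold IsAnchoredPos at hanch
    rw [Equiv.apply_symm_apply] at hanch
    rw [hAeq] at hanch
    exact hτpr w (by rw [hanch]; simp)
  set np : ℤ → ℤ := fun w => ι (Nat.find (hQ w)) with hnp_def
  have hnpτ : ∀ w, (2^(k+1):ℤ) ∣ (np w - τ w) := fun w => (Nat.find_spec (hQ w)).1
  have hnpun : ∀ w, ¬ IsAnchoredPos S (np w) := fun w => (Nat.find_spec (hQ w)).2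
  -- the side condition
  set side : ℤ → Prop := fun q => (2^(k+1) : ℤ) ∣ ((S.A (q % 2^k)).1 - q) with hside_def
  -- τ w is in the non-anchor subclass; q with ¬ side q is too
  have hτq : ∀ q : ℤ, ¬ side q → (2^(k+1):ℤ) ∣ (q - τ (q % 2^k)) := by
    intro q hq
    have h1 : (2:ℤ)^k ∣ q - (S.A (q % 2^k)).1 := by
      have := dvd_neg.mpr (hprq q); simpa using this
    have h2 : (2:ℤ)^k ∣ τ (q % 2^k) - (S.A (q % 2^k)).1 := by
      have ha := hτw (q % 2^k)
      have hb : (2:ℤ)^k ∣ (q % 2^k) - (S.A (q % 2^k)).1 := by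
        have := dvd_neg.mpr (hS.anch1 (q % 2^k)); simpa using this
      have := dvd_add ha hb
      simpa using this
    have h3 : ¬ (2*2^k:ℤ) ∣ q - (S.A (q % 2^k)).1 := by
      rw [← h2k1]
      intro h
      exact hq (by rw [hside_def]; have := dvd_neg.mpr h; simpa using this)
    have h4 : ¬ (2*2^k:ℤ) ∣ τ (q % 2^k) - (S.A (q % 2^k)).1 := by
      rw [← h2k1]; exact hτpr (q % 2^k)
    have h5 := two_dvd_helper (ne_of_gt h2k) h1 h2 h3 h4
    rw [h2k1]
    exact h5
  have hρshift : ∀ q : ℤ, (q + 2^k) % 2^k = q % 2^k := by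
    intro q
    exact emod_eq_of_dvd ⟨1, by ring⟩
  have hwidem : ∀ q : ℤ, (q % 2^k) % 2^k = q % 2^k := fun q => Int.emod_emod_of_dvd q dvd_rfl
  -- exactly one of `side q`, `side (q + 2^k)` holds
  have hopp : ∀ q : ℤ, (side q ∧ ¬ side (q + 2^k)) ∨ (¬ side q ∧ side (q + 2^k)) := by
    intro q
    obtain ⟨s, hs⟩ := hprq q
    have hunf : side (q + 2^k) ↔ (2^(k+1) : ℤ) ∣ ((S.A (q % 2^k)).1 - (q + 2^k)) := by
      rw [hside_def]; simp only [hρshift q]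
    rcases Int.even_or_odd s with ⟨u, hu⟩ | ⟨u, hu⟩
    · left
      constructor
      · show (2^(k+1) : ℤ) ∣ ((S.A (q % 2^k)).1 - q)
        exact ⟨u, by rw [hs, hu, h2k1]; ring⟩
      · rw [hunf]
        rintro ⟨v, hv⟩
        have heq : (2:ℤ)^k * (s - 1) = 2^k * (2*v) := by
          rw [h2k1] at hv
          have : (S.A (q % 2^k)).1 - (q + 2^k) = ((S.A (q % 2^k)).1 - q) - 2^k := by ring
          rw [this, hs] at hv
          linarith
        have := mul_left_cancel₀ (ne_of_gt h2k) heq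
        omega
    · right
      constructor
      · show ¬ (2^(k+1) : ℤ) ∣ ((S.A (q % 2^k)).1 - q)
        rintro ⟨v, hv⟩
        rw [hs, h2k1] at hv
        have heq : (2:ℤ)^k * s = 2^k * (2*v) := by linarith
        have := mul_left_cancel₀ (ne_of_gt h2k) heq
        omega
      · rw [hunf]
        refine ⟨u, ?_⟩
        have : (S.A (q % 2^k)).1 - (q + 2^k) = ((S.A (q % 2^k)).1 - q) - 2^k := by ring
        rw [this, hs, hu, h2k1]; ring
  -- the new stage
  set D' : ℤ → Set X := fun q => if side q then FA (q % 2^k) else FO (q % 2^k) with hD'_def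
  set A' : ℤ → ℤ × X := fun q =>
    if side q then S.A (q % 2^k) else (np (q % 2^k), Fnv (q % 2^k)) with hA'_def
  have hsubD' : ∀ q, D' q ⊆ S.D q := by
    intro q
    rw [hD'_def]
    by_cases h : side q
    · simp only [if_pos h]
      rw [← hDρ q]
      exact hsub1 _
    · simp only [if_neg h]
      rw [← hDρ q]
      exact hsub2 _
  have hsiff : ∀ q q' : ℤ, (2^(k+1) : ℤ) ∣ (q - q') → (side q ↔ side q') ∧ q % 2^k = q' % 2^k := by
    intro q q' hdvd
    have hk : (2:ℤ)^k ∣ (q - q') := dvd_trans hdvd21 hdvd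
    have hr : q % 2^k = q' % 2^k := emod_eq_of_dvd hk
    refine ⟨?_, hr⟩
    rw [hside_def]; simp only [hr]
    constructor
    · intro h
      have h2 : (2^(k+1):ℤ) ∣ ((S.A (q' % 2^k)).1 - q) - (q' - q) := by
        refine dvd_sub h ?_
        have := dvd_neg.mpr hdvd
        simpa using this
      simpa using h2
    · intro h
      have h2 : (2^(k+1):ℤ) ∣ ((S.A (q' % 2^k)).1 - q') - (q - q') := by
        refine dvd_sub h ?_
        simpa using hdvd
      have e : ((S.A (q' % 2^k)).1 - q') - (q - q') = (S.A (q' % 2^k)).1 - q := by ring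
      rwa [e] at h2
  have hconstD' : ∀ q q' : ℤ, (2^(k+1) : ℤ) ∣ (q - q') → D' q = D' q' ∧ A' q = A' q' := by
    intro q q' hdvd
    obtain ⟨hiff, hr⟩ := hsiff q q' hdvd
    rw [hD'_def, hA'_def]
    by_cases h : side q
    · simp only [if_pos h, if_pos (hiff.mp h), hr]
      exact ⟨trivial, trivial⟩
    · simp only [if_neg h, if_neg (fun hc => h (hiff.mpr hc)), hr]
      exact ⟨trivial, trivial⟩

  have hDisj : ∀ (q q' : ℤ) (x : X), x ∈ D' q → x ∈ D' q' → (2^(k+1) : ℤ) ∣ (q - q') := by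
    intro q q' x hx hx'
    have hxq : x ∈ S.D q := hsubD' q hx
    have hxq' : x ∈ S.D q' := hsubD' q' hx'
    obtain ⟨t, ht⟩ := hS.disj q q' x hxq hxq'
    rcases Int.even_or_odd t with ⟨u, hu⟩ | ⟨u, hu⟩
    · exact ⟨u, by rw [ht, hu, h2k1]; ring⟩
    · exfalso
      have hq' : (2^(k+1) : ℤ) ∣ (q' - (q + 2^k)) := by
        refine ⟨-(u+1), ?_⟩
        have : q' = q - 2^k * t := by linarith [ht]
        rw [this, hu, h2k1]; ring
      have hD'eq : D' q' = D' (q + 2^k) := (hconstD' q' (q + 2^k) hq').1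
      rw [hD'eq] at hx'
      have hw : (q + 2^k) % 2^k = q % 2^k := hρshift q
      rcases hopp q with ⟨h1, h2⟩ | ⟨h1, h2⟩
      · rw [hD'_def] at hx hx'
        simp only [if_pos h1] at hx
        simp only [if_neg h2, hw] at hx'
        exact hdisj' (q % 2^k) x ⟨hx, hx'⟩
      · rw [hD'_def] at hx hx'
        simp only [if_neg h1] at hx
        simp only [if_pos h2, hw] at hx'
        exact hdisj' (q % 2^k) x ⟨hx', hx⟩
  have hCover : ∀ x : X, ∃ q, x ∈ D' q := by
    intro x
    obtain ⟨q0, hq0⟩ := hS.cover x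
    have hxw : x ∈ S.D (q0 % 2^k) := by rw [hDρ]; exact hq0
    have hprρ : (S.A (q0 % 2^k)).1 % 2^k = q0 % 2^k := by
      have h1 : (2:ℤ)^k ∣ ((S.A (q0 % 2^k)).1 - q0 % 2^k) := hS.anch1 _
      rw [emod_eq_of_dvd h1, hwidem]
    rcases hcov' (q0 % 2^k) x hxw with h | h
    · refine ⟨(S.A (q0 % 2^k)).1, ?_⟩
      have hsd : side ((S.A (q0 % 2^k)).1) := by
        show (2^(k+1) : ℤ) ∣ ((S.A (((S.A (q0 % 2^k)).1) % 2^k)).1 - (S.A (q0 % 2^k)).1)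
        rw [hprρ]
        simp
      rw [hD'_def]
      simp only [if_pos hsd, hprρ]
      exact h
    · refine ⟨(S.A (q0 % 2^k)).1 + 2^k, ?_⟩
      have hw2 : ((S.A (q0 % 2^k)).1 + 2^k) % 2^k = q0 % 2^k := by
        rw [hρshift, hprρ]
      have hsd : ¬ side ((S.A (q0 % 2^k)).1 + 2^k) := by
        show ¬ (2^(k+1) : ℤ) ∣ ((S.A ((((S.A (q0 % 2^k)).1 + 2^k)) % 2^k)).1 -
          ((S.A (q0 % 2^k)).1 + 2^k))
        rw [hw2]
        intro hcc
        have he : ((S.A (q0 % 2^k)).1 - ((S.A (q0 % 2^k)).1 + 2^k)) = -(2^k) := by ring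
        rw [he] at hcc
        exact hnd (by simpa using hcc)
      rw [hD'_def]
      simp only [if_neg hsd, hw2]
      exact h
  have hGood : ∀ q, GoodSet (D' q) := by
    intro q
    rw [hD'_def]
    by_cases h : side q
    · simp only [if_pos h]; exact hG1 _
    · simp only [if_neg h]; exact hG2 _
  have hAnch1 : ∀ q, (2^(k+1) : ℤ) ∣ ((A' q).1 - q) := by
    intro q
    rw [hA'_def]
    by_cases h : side q
    · simp only [if_pos h]
      exact h
    · simp only [if_neg h]
      have h1 := hnpτ (q % 2^k)
      have h2 := hτq q h
      have h3 : (2^(k+1):ℤ) ∣ (np (q % 2^k) - τ (q % 2^k)) + (τ (q % 2^k) - q) := by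
        refine dvd_add h1 ?_
        have h4 := dvd_neg.mpr h2
        simpa using h4
      simpa using h3
  have hAnch2 : ∀ q, (A' q).2 ∈ D' q := by
    intro q
    rw [hA'_def, hD'_def]
    by_cases h : side q
    · simp only [if_pos h]
      exact hanch' _
    · simp only [if_neg h]
      exact hnv' _
  have hSep : ∀ q, (∀ u ∈ D' q, ∀ v ∈ D' (q + 2^k), u < v) ∨
      (∀ u ∈ D' q, ∀ v ∈ D' (q + 2^k), v < u) := by
    intro q
    have hw : (q + 2^k) % 2^k = q % 2^k := hρshift q
    rcases hopp q with ⟨h1, h2⟩ | ⟨h1, h2⟩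
    · have e1 : D' q = FA (q % 2^k) := by rw [hD'_def]; simp only [if_pos h1]
      have e2 : D' (q + 2^k) = FO (q % 2^k) := by
        rw [hD'_def]; simp only [if_neg h2, hw]
      rw [e1, e2]
      exact hsep' _
    · have e1 : D' q = FO (q % 2^k) := by rw [hD'_def]; simp only [if_neg h1]
      have e2 : D' (q + 2^k) = FA (q % 2^k) := by
        rw [hD'_def]; simp only [if_pos h2, hw]
      rw [e1, e2]
      rcases hsep' (q % 2^k) with h | h
      · exact Or.inr (fun u hu v hv => h v hv u hu)
      · exact Or.inl (fun u hu v hv => h v hv u hu)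
  have hKeep : ∀ q, ((2^(k+1) : ℤ) ∣ ((S.A q).1 - q)) → A' q = S.A q := by
    intro q hdvd
    have hsd : side q := by
      show (2^(k+1) : ℤ) ∣ ((S.A (q % 2^k)).1 - q)
      rw [hAρ q]
      exact hdvd
    rw [hA'_def]
    simp only [if_pos hsd]
    exact hAρ q
  have hPv : ∀ x, IsPriority e S x → ∃ p, A' p = (p, x) := by
    intro x hx
    have hxeq : x = xstar := by
      have h1 := hx.2 xstar hxstar_un
      have h2 := hxstar_pri.2 x hx.1
      have h3 := le_antisymm h1 h2
      exact e.symm.injective h3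
    subst hxeq
    obtain ⟨q0, hq0⟩ := hS.cover xstar
    have hxw : xstar ∈ S.D (q0 % 2^k) := by rw [hDρ]; exact hq0
    have hpw : (np (q0 % 2^k)) % 2^k = q0 % 2^k := by
      have h1 : (2:ℤ)^k ∣ (np (q0 % 2^k) - τ (q0 % 2^k)) := dvd_trans hdvd21 (hnpτ _)
      have h2 : (2:ℤ)^k ∣ (τ (q0 % 2^k) - q0 % 2^k) := hτw _
      have h3 : (2:ℤ)^k ∣ (np (q0 % 2^k) - q0 % 2^k) := by
        have h4 := dvd_add h1 h2
        simpa using h4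
      rw [emod_eq_of_dvd h3, hwidem]
    have hnsd : ¬ side (np (q0 % 2^k)) := by
      intro hsd
      have h1 : (2^(k+1):ℤ) ∣ ((S.A (q0 % 2^k)).1 - np (q0 % 2^k)) := by
        have h5 : (2^(k+1) : ℤ) ∣ ((S.A ((np (q0 % 2^k)) % 2^k)).1 - np (q0 % 2^k)) := hsd
        rwa [hpw] at h5
      have h2 : (2^(k+1):ℤ) ∣ ((S.A (q0 % 2^k)).1 - τ (q0 % 2^k)) := by
        have h6 := dvd_add h1 (hnpτ (q0 % 2^k))
        simpa using h6
      exact hτpr _ (by have h7 := dvd_neg.mpr h2; simpa using h7)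
    refine ⟨np (q0 % 2^k), ?_⟩
    rw [hA'_def]
    simp only [if_neg hnsd, hpw]
    rw [hnvstar' _ hxw]
  have hPp : ∀ p, ¬ IsAnchoredPos S p → ¬ ((2^(k+1):ℤ) ∣ ((S.A p).1 - p)) →
      (∀ p', ((2^(k+1):ℤ) ∣ (p' - p)) → ¬ IsAnchoredPos S p' → ι.symm p ≤ ι.symm p') →
      (A' p).1 = p := by
    intro p hup hnd2 hleast
    have hnsd : ¬ side p := by
      intro hsd
      have h5 : (2^(k+1) : ℤ) ∣ ((S.A (p % 2^k)).1 - p) := hsd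
      rw [hAρ p] at h5
      exact hnd2 h5
    have hfind : Nat.find (hQ (p % 2^k)) = ι.symm p := by
      have hQp : ((2^(k+1):ℤ) ∣ (ι (ι.symm p) - τ (p % 2^k))) ∧
          ¬ IsAnchoredPos S (ι (ι.symm p)) := by
        rw [Equiv.apply_symm_apply]
        exact ⟨hτq p hnsd, hup⟩
      apply le_antisymm
      · exact Nat.find_le hQp
      · set n := Nat.find (hQ (p % 2^k)) with hn_def
        have hQn := Nat.find_spec (hQ (p % 2^k))
        have hdvdn : (2^(k+1):ℤ) ∣ ((ι n : ℤ) - p) := by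
          have h1 := hQn.1
          have h2 := hτq p hnsd
          have h3 : (2^(k+1):ℤ) ∣ (ι n - τ (p % 2^k)) - (p - τ (p % 2^k)) :=
            dvd_sub h1 h2
          have he : (ι n - τ (p % 2^k)) - (p - τ (p % 2^k)) = ι n - p := by ring
          rwa [he] at h3
        have h8 := hleast (ι n) hdvdn hQn.2
        rw [Equiv.symm_apply_apply] at h8
        exact h8
    rw [hA'_def]
    simp only [if_neg hnsd]
    show np (p % 2^k) = p
    rw [hnp_def]
    simp only [hfind]
    exact Equiv.apply_symm_apply ι p
  exact ⟨⟨D', A'⟩, ⟨hconstD', hDisj, hCover, hGood, hAnch1, hAnch2⟩,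
    ⟨hsubD', hSep, hKeep, hPv, hPp⟩⟩

end StepLemma

section Assembly

variable {X : Type*} [LinearOrder X] [TopologicalSpace X] [OrderTopology X]

lemma int_abs_lt_two_pow (z : ℤ) : ∃ n : ℕ, |z| < 2^n := by
  refine ⟨z.natAbs, ?_⟩
  have h1 : z.natAbs < 2^z.natAbs := Nat.lt_two_pow_self
  have h2 : (z.natAbs : ℤ) < (2:ℤ)^z.natAbs := by exact_mod_cast h1
  rwa [Int.abs_eq_natAbs]

lemma exists_two_pow_odd : ∀ (n : ℕ) (d : ℤ), d.natAbs ≤ n → d ≠ 0 →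
    ∃ (t : ℕ) (u : ℤ), d = 2^t * u ∧ ¬ ((2:ℤ) ∣ u) := by
  intro n
  induction n with
  | zero => intro d h hd; exfalso; omega
  | succ n ih =>
      intro d h hd
      by_cases h2 : (2:ℤ) ∣ d
      · obtain ⟨d', rfl⟩ := h2
        have hd' : d' ≠ 0 := by intro hc; rw [hc] at hd; simp at hd
        have hna : d'.natAbs ≤ n := by
          have : (2*d').natAbs = 2 * d'.natAbs := by
            rw [Int.natAbs_mul]; rfl
          omega
        obtain ⟨t, u, he, hu⟩ := ih d' hna hd'
        exact ⟨t+1, u, by rw [he]; ring, hu⟩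
      · exact ⟨0, d, by ring, h2⟩

lemma base_ex [Infinite X] (hni : ∀ x : X, ¬ IsOpen ({x} : Set X)) (e : ℕ ≃ X) :
    ∃ S : Stage X, StageOK 0 S := by
  refine ⟨⟨fun _ => univ, fun _ => (0, e 0)⟩, ?_⟩
  refine ⟨fun q q' _ => ⟨rfl, rfl⟩, fun q q' x _ _ => by simpa using one_dvd _,
    fun x => ⟨0, mem_univ x⟩, ?_, fun q => by simpa using one_dvd _, fun q => mem_univ _⟩
  intro q
  refine ⟨Set.infinite_univ, fun a _ b _ c _ _ => mem_univ c, ?_, ?_⟩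
  · intro z _ hleast u _ hzu
    by_contra hc
    rw [Set.not_nonempty_iff_eq_empty] at hc
    refine (limit_below hni hzu hc).1 ?_
    intro w _
    exact not_lt.mp (hleast w (mem_univ w))
  · intro z _ hgreat u _ huz
    by_contra hc
    rw [Set.not_nonempty_iff_eq_empty] at hc
    refine (limit_above hni huz hc).1 ?_
    intro w _
    exact not_lt.mp (hgreat w (mem_univ w))

theorem sufficiency [Countable X] [Infinite X] (hni : ∀ x : X, ¬ IsOpen ({x} : Set X)) :
    ∃ f : ℤ → X, Function.Bijective f ∧
      ∀ a b c : ℤ, b - a = c - b → ¬ (f a < f b ∧ f b < f c) := by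
  classical
  obtain ⟨dX⟩ := nonempty_denumerable X
  let e : ℕ ≃ X := (Denumerable.eqv X).symm
  let ι : ℕ ≃ ℤ := (Denumerable.eqv ℤ).symm
  obtain ⟨S0, hS0⟩ := base_ex hni e
  have hstep : ∀ (n : ℕ) (S : Stage X), StageOK n S →
      ∃ S', StageOK (n+1) S' ∧ STrans e ι n S S' :=
    fun n S hS => step_ex hni e ι n S hS
  let Ch : ∀ n : ℕ, {S : Stage X // StageOK n S} := fun n =>
    Nat.rec (motive := fun n => {S : Stage X // StageOK n S}) ⟨S0, hS0⟩
      (fun m ih => ⟨Classical.choose (hstep m ih.1 ih.2),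
        (Classical.choose_spec (hstep m ih.1 ih.2)).1⟩) n
  have hTr : ∀ n, STrans e ι n (Ch n).1 (Ch (n+1)).1 :=
    fun n => (Classical.choose_spec (hstep n (Ch n).1 (Ch n).2)).2
  have hOK : ∀ n, StageOK n (Ch n).1 := fun n => (Ch n).2
  have hDmono : ∀ (n m : ℕ), n ≤ m → ∀ q, ((Ch m).1).D q ⊆ ((Ch n).1).D q := by
    intro n m hnm
    induction m, hnm using Nat.le_induction with
    | base => exact fun q => subset_rfl
    | succ m hm ih => exact fun q => subset_trans ((hTr m).sub q) (ih q)
  have hkeep1 : ∀ n p, IsAnchoredPos (Ch n).1 p → ((Ch (n+1)).1).A p = ((Ch n).1).A p := by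
    intro n p h
    refine (hTr n).keep p ?_
    rw [h]; simp
  have hpersist : ∀ (n m : ℕ), n ≤ m → ∀ p, IsAnchoredPos (Ch n).1 p →
      ((Ch m).1).A p = ((Ch n).1).A p := by
    intro n m hnm
    induction m, hnm using Nat.le_induction with
    | base => exact fun p _ => rfl
    | succ m hm ih =>
        intro p hp
        have h1 := ih p hp
        have h2 : IsAnchoredPos (Ch m).1 p := by unfold IsAnchoredPos; rw [h1]; exact hp
        rw [hkeep1 m p h2, h1]
  have happers : ∀ (n m : ℕ), n ≤ m → ∀ p, IsAnchoredPos (Ch n).1 p →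
      IsAnchoredPos (Ch m).1 p := by
    intro n m hnm p hp
    unfold IsAnchoredPos
    rw [hpersist n m hnm p hp]
    exact hp
  have hvalpers : ∀ n x, IsAnchoredVal (Ch n).1 x → IsAnchoredVal (Ch (n+1)).1 x := by
    rintro n x ⟨q, hq⟩
    have hcl : ((Ch n).1).A (((Ch n).1.A q).1) = ((Ch n).1).A q :=
      ((hOK n).const _ q ((hOK n).anch1 q)).2
    have hanch : IsAnchoredPos (Ch n).1 (((Ch n).1.A q).1) := by
      unfold IsAnchoredPos; rw [hcl]
    refine ⟨(((Ch n).1.A q).1), ?_⟩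
    rw [hkeep1 n _ hanch, hcl, hq]
  have hvalpers' : ∀ (n m : ℕ), n ≤ m → ∀ x, IsAnchoredVal (Ch n).1 x →
      IsAnchoredVal (Ch m).1 x := by
    intro n m hnm
    induction m, hnm using Nat.le_induction with
    | base => exact fun x h => h
    | succ m hm ih => exact fun x h => hvalpers m x (ih x h)
  have hKgen : ∀ (N : ℕ), (∀ m, m < N → ∃ n, IsAnchoredPos (Ch n).1 (ι m)) →
      ∃ K, ∀ m, m < N → IsAnchoredPos (Ch K).1 (ι m) := by
    intro N
    induction N with
    | zero => exact fun _ => ⟨0, by omega⟩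
    | succ N ihN =>
        intro h
        obtain ⟨K1, hK1⟩ := ihN (fun m hm => h m (by omega))
        obtain ⟨K2, hK2⟩ := h N (by omega)
        refine ⟨max K1 K2, fun m hm => ?_⟩
        rcases Nat.lt_or_ge m N with hlt | hge
        · exact happers K1 _ (le_max_left _ _) _ (hK1 m hlt)
        · have hmN : m = N := by omega
          subst hmN
          exact happers K2 _ (le_max_right _ _) _ hK2
  have hposanch : ∀ N : ℕ, ∃ n, IsAnchoredPos (Ch n).1 (ι N) := by
    intro N
    induction N using Nat.strong_induction_on with
    | _ N IH =>
      obtain ⟨K0, hK0⟩ := hKgen N IH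
      by_cases hev : ∃ k, K0 ≤ k ∧ (¬ IsAnchoredPos (Ch k).1 (ι N)) ∧
          ¬ ((2:ℤ)^(k+1) ∣ (((Ch k).1.A (ι N)).1 - ι N))
      · obtain ⟨k, hk1, hk2, hk3⟩ := hev
        refine ⟨k+1, ?_⟩
        refine (hTr k).pp (ι N) hk2 hk3 ?_
        intro p' hdvd hunanch
        rw [Equiv.symm_apply_apply]
        by_contra hcon
        push_neg at hcon
        have h1 := hK0 (ι.symm p') hcon
        rw [Equiv.apply_symm_apply] at h1
        exact hunanch (happers K0 k hk1 _ h1)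
      · by_cases hdone : ∃ n, IsAnchoredPos (Ch n).1 (ι N)
        · exact hdone
        · exfalso
          push_neg at hev hdone
          have hAconst : ∀ k, K0 ≤ k → ((Ch k).1).A (ι N) = ((Ch K0).1).A (ι N) := by
            intro k hk
            induction k, hk using Nat.le_induction with
            | base => rfl
            | succ m hm ih =>
                have h3 := hev m hm (hdone m)
                have h4 : ((Ch (m+1)).1).A (ι N) = ((Ch m).1).A (ι N) :=
                  (hTr m).keep (ι N) h3
                rw [h4, ih]
          set a := (((Ch K0).1).A (ι N)).1 with ha_def
          have hane : a - ι N ≠ 0 := by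
            intro hc
            apply hdone K0
            show (((Ch K0).1).A (ι N)).1 = ι N
            omega
          obtain ⟨n0, hn0⟩ := int_abs_lt_two_pow (a - ι N)
          have h5 := hev (max K0 n0) (le_max_left _ _) (hdone _)
          rw [hAconst _ (le_max_left _ _)] at h5
          have h8 : (2:ℤ)^(max K0 n0 + 1) ≤ |a - ι N| :=
            Int.le_of_dvd (abs_pos.mpr hane) ((dvd_abs _ _).mpr h5)
          have h6 : (2:ℤ)^(n0) ≤ 2^(max K0 n0 + 1) :=
            pow_le_pow_right₀ (by norm_num) (by omega)
          linarith
  have hposanch' : ∀ p : ℤ, ∃ n, IsAnchoredPos (Ch n).1 p := by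
    intro p
    have h := hposanch (ι.symm p)
    rwa [Equiv.apply_symm_apply] at h
  -- value fairness
  have hKgenV : ∀ (N : ℕ), (∀ m, m < N → ∃ n, IsAnchoredVal (Ch n).1 (e m)) →
      ∃ K, ∀ m, m < N → IsAnchoredVal (Ch K).1 (e m) := by
    intro N
    induction N with
    | zero => exact fun _ => ⟨0, by omega⟩
    | succ N ihN =>
        intro h
        obtain ⟨K1, hK1⟩ := ihN (fun m hm => h m (by omega))
        obtain ⟨K2, hK2⟩ := h N (by omega)
        refine ⟨max K1 K2, fun m hm => ?_⟩
        rcases Nat.lt_or_ge m N with hlt | hge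
        · exact hvalpers' K1 _ (le_max_left _ _) _ (hK1 m hlt)
        · have hmN : m = N := by omega
          subst hmN
          exact hvalpers' K2 _ (le_max_right _ _) _ hK2
  have hvalanch : ∀ N : ℕ, ∃ n, IsAnchoredVal (Ch n).1 (e N) := by
    intro N
    induction N using Nat.strong_induction_on with
    | _ N IH =>
      obtain ⟨K0, hK0⟩ := hKgenV N IH
      by_cases hdone : IsAnchoredVal (Ch K0).1 (e N)
      · exact ⟨K0, hdone⟩
      · have hpri : IsPriority e (Ch K0).1 (e N) := by
          refine ⟨hdone, ?_⟩
          intro y hy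
          rw [Equiv.symm_apply_apply]
          by_contra hcon
          push_neg at hcon
          have h1 := hK0 (e.symm y) hcon
          rw [Equiv.apply_symm_apply] at h1
          exact hy h1
        obtain ⟨p, hp⟩ := (hTr K0).pv (e N) hpri
        exact ⟨K0 + 1, ⟨p, by rw [hp]⟩⟩
  have hvalanch' : ∀ x : X, ∃ n, IsAnchoredVal (Ch n).1 x := by
    intro x
    have h := hvalanch (e.symm x)
    rwa [Equiv.apply_symm_apply] at h
  -- the bijection
  set f : ℤ → X := fun p => (((Ch (Nat.find (hposanch' p))).1).A p).2 with hf_def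
  have hfA : ∀ (p : ℤ) (n : ℕ), Nat.find (hposanch' p) ≤ n → ((Ch n).1).A p = (p, f p) := by
    intro p n hn
    have h1 := hpersist _ n hn p (Nat.find_spec (hposanch' p))
    rw [h1, hf_def]
    have h2 := Nat.find_spec (hposanch' p)
    exact Prod.ext h2 rfl
  have hfD : ∀ (p : ℤ) (n : ℕ), f p ∈ ((Ch n).1).D p := by
    intro p n
    rcases le_total n (Nat.find (hposanch' p)) with h | h
    · refine hDmono n _ h p ?_
      exact (hOK _).anch2 p
    · have h1 := (hOK n).anch2 p
      rw [hfA p n h] at h1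
      exact h1
  have hinj : Function.Injective f := by
    intro p p' hpp
    by_contra hne
    obtain ⟨n0, hn0⟩ := int_abs_lt_two_pow (p - p')
    have h1 : f p ∈ ((Ch n0).1).D p := hfD p n0
    have h2 : f p ∈ ((Ch n0).1).D p' := by rw [hpp]; exact hfD p' n0
    have h3 := (hOK n0).disj p p' (f p) h1 h2
    have h4 : p - p' ≠ 0 := fun hc => hne (by omega)
    have h5 : (2:ℤ)^n0 ≤ |p - p'| :=
      Int.le_of_dvd (abs_pos.mpr h4) ((dvd_abs _ _).mpr h3)
    linarith
  have hsurj : Function.Surjective f := by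
    intro x
    obtain ⟨n, q, hq⟩ := hvalanch' x
    have hcl : ((Ch n).1).A (((Ch n).1.A q).1) = ((Ch n).1).A q :=
      ((hOK n).const _ q ((hOK n).anch1 q)).2
    have hanch : IsAnchoredPos (Ch n).1 (((Ch n).1.A q).1) := by
      show (((Ch n).1).A (((Ch n).1.A q).1)).1 = ((Ch n).1.A q).1
      rw [hcl]
    set p := ((Ch n).1.A q).1 with hp_def
    have hle : Nat.find (hposanch' p) ≤ n := Nat.find_le hanch
    have h6 := hfA p n hle
    refine ⟨p, ?_⟩
    have h7 : ((Ch n).1).A p = ((Ch n).1).A q := hcl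
    rw [h6] at h7
    rw [← hq, ← h7]
  refine ⟨f, ⟨hinj, hsurj⟩, ?_⟩
  -- chaoticity
  rintro a b c habc ⟨h1, h2⟩
  have hd0 : b - a ≠ 0 := by
    intro hc
    have : a = b := by omega
    subst this
    exact lt_irrefl _ h1
  obtain ⟨t, u, htu, hu⟩ := exists_two_pow_odd (b-a).natAbs (b-a) (le_refl _) hd0
  -- b ≡ a + 2^t  and c ≡ a  mod 2^(t+1)
  have hub : ∃ v : ℤ, u = 2*v + 1 := by
    rcases Int.even_or_odd u with ⟨v, hv⟩ | ⟨v, hv⟩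
    · exact absurd ⟨v, by omega⟩ hu
    · exact ⟨v, hv⟩
  obtain ⟨v, hv⟩ := hub
  have hca : (2:ℤ)^(t+1) ∣ (c - a) := by
    refine ⟨u, ?_⟩
    have : c - a = 2*(b-a) := by omega
    rw [this, htu]; ring
  have hba : (2:ℤ)^(t+1) ∣ (b - (a + 2^t)) := by
    refine ⟨v, ?_⟩
    have hh : b - (a + 2^t) = (b - a) - 2^t := by ring
    rw [hh, htu, hv]; ring
  have hfc : f c ∈ ((Ch (t+1)).1).D a := by
    have hDe : ((Ch (t+1)).1).D c = ((Ch (t+1)).1).D a :=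
      ((hOK (t+1)).const c a hca).1
    rw [← hDe]; exact hfD c (t+1)
  have hfb : f b ∈ ((Ch (t+1)).1).D (a + 2^t) := by
    have hDe : ((Ch (t+1)).1).D b = ((Ch (t+1)).1).D (a + 2^t) :=
      ((hOK (t+1)).const b (a + 2^t) hba).1
    rw [← hDe]; exact hfD b (t+1)
  have hfa : f a ∈ ((Ch (t+1)).1).D a := hfD a (t+1)
  rcases (hTr t).sep a with hsep | hsep
  · exact lt_irrefl _ (lt_trans h2 (hsep (f c) hfc (f b) hfb))
  · exact lt_irrefl _ (lt_trans h1 (hsep (f a) hfa (f b) hfb))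

end Assembly

section Final

variable {Y : Type*} [LinearOrder Y]

lemma chaotic_onesided_max (f : ℤ → Y) (hinj : Function.Injective f)
    (hsurj : Function.Surjective f)
    (H : ∀ n d : ℤ, ¬ (f (n - d) < f n ∧ f n < f (n + d)))
    {x p : Y} (hpx : p < x) (hempty : Ioo p x = ∅) (hmax : IsMax x) : False := by
  obtain ⟨b, hb⟩ := hsurj x
  obtain ⟨bp, hbp⟩ := hsurj p
  set m' := bp - b with hm'_def
  have hbm' : b + m' = bp := by ring
  have hm' : m' ≠ 0 := by
    intro h
    rw [h, add_zero] at hbm'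
    rw [hbm', hbp] at hb
    exact absurd hb (ne_of_lt hpx)
  have h1 : ¬ f (b + 2*m') < p := by
    intro h
    refine H (b + m') (-m') ⟨?_, ?_⟩
    · have e : b + m' - -m' = b + 2*m' := by ring
      rw [e, hbm', hbp]; exact h
    · have e : b + m' + -m' = b := by ring
      rw [e, hb, hbm', hbp]; exact hpx
  have hne_p : f (b + 2*m') ≠ p := by
    rw [← hbp]; intro h; have := hinj h; omega
  have hgt_p : p < f (b + 2*m') := lt_of_le_of_ne (not_lt.mp h1) (Ne.symm hne_p)
  have hne_x : f (b + 2*m') ≠ x := by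
    rw [← hb]; intro h; have := hinj h; omega
  have hnot : ¬ f (b + 2*m') < x := by
    intro h
    have : f (b + 2*m') ∈ Ioo p x := ⟨hgt_p, h⟩
    rw [hempty] at this
    exact this
  have : x < f (b + 2*m') := lt_of_le_of_ne (not_lt.mp hnot) (Ne.symm hne_x)
  exact absurd (hmax (le_of_lt this)) (not_le.mpr this)

end Final

/-- Let (X, ⪯) be a countably infinite totally ordered set. There exists a
chaotic bijection f : ℤ → X if and only if X has no isolated points. -/
theorem stmt_1 {X : Type*} [LinearOrder X] [TopologicalSpace X] [OrderTopology X]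
    [Countable X] [Infinite X] :
    (∃ f : ℤ → X, Function.Bijective f ∧
        ¬ ∃ a b c : ℤ, f a < f b ∧ f b < f c ∧ (b : ℚ) - (a : ℚ) = (c : ℚ) - (b : ℚ)) ↔
      ∀ x : X, ¬ IsOpen ({x} : Set X) := by
  constructor
  · rintro ⟨f, hbij, hch⟩ x hopen
    have H : ∀ n d : ℤ, ¬ (f (n - d) < f n ∧ f n < f (n + d)) := by
      rintro n d ⟨ha, hb⟩
      exact hch ⟨n - d, n, n + d, ha, hb, by push_cast; ring⟩
    have hx : {x} ∈ 𝓝 x := hopen.mem_nhds rfl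
    have hs : (∃ u, x < u ∧ Ioo x u = ∅) ∨ IsMax x := by
      by_cases hmax : IsMax x
      · exact Or.inr hmax
      · obtain ⟨u0, hu0⟩ := not_isMax_iff.mp hmax
        obtain ⟨u, hxu, hsub⟩ := exists_Ico_subset_of_mem_nhds hx ⟨u0, hu0⟩
        refine Or.inl ⟨u, hxu, ?_⟩
        rw [Set.eq_empty_iff_forall_notMem]
        rintro z ⟨hz1, hz2⟩
        have hmem : z ∈ ({x} : Set X) := hsub ⟨le_of_lt hz1, hz2⟩
        rw [mem_singleton_iff] at hmem
        exact absurd hmem (ne_of_gt hz1)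
    have hp : (∃ l, l < x ∧ Ioo l x = ∅) ∨ IsMin x := by
      by_cases hmin : IsMin x
      · exact Or.inr hmin
      · obtain ⟨l0, hl0⟩ := not_isMin_iff.mp hmin
        obtain ⟨l, hlx, hsub⟩ := exists_Ioc_subset_of_mem_nhds hx ⟨l0, hl0⟩
        refine Or.inl ⟨l, hlx, ?_⟩
        rw [Set.eq_empty_iff_forall_notMem]
        rintro z ⟨hz1, hz2⟩
        have hmem : z ∈ ({x} : Set X) := hsub ⟨hz1, le_of_lt hz2⟩
        rw [mem_singleton_iff] at hmem
        exact absurd hmem (ne_of_lt hz2)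
    rcases hs with ⟨u, hxu, hu⟩ | hmax
    · rcases hp with ⟨l, hlx, hl⟩ | hmin
      · exact chaotic_interior f hbij.1 hbij.2 H hxu hu hlx hl
      · exact chaotic_onesided f hbij.1 hbij.2 H hxu hu hmin
    · rcases hp with ⟨l, hlx, hl⟩ | hmin
      · exact chaotic_onesided_max f hbij.1 hbij.2 H hlx hl hmax
      · obtain ⟨y, hy⟩ := exists_ne x
        exact hy (le_antisymm (hmax.isTop y) (hmin.isBot y))
  · intro hni
    obtain ⟨f, hbij, hch⟩ := sufficiency hni
    refine ⟨f, hbij, ?_⟩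
    rintro ⟨a, b, c, h1, h2, hq⟩
    have hz : b - a = c - b := by exact_mod_cast hq
    exact hch a b c hz ⟨h1, h2⟩
end

section
/- Let S ⊆ ℚ be a set with the property that for every a ∈ S, the set {ord₂(b − a) : b ∈ S, b ≠ a} ⊆ ℤ is unbounded from above, and let (X, ⪯) be a totally ordered set. If there exists a binary bijection f : S → X, then X has no isolated points. -/
/-- The 2-adic order of a rational number, with `ord2 0 = ⊤`. -/
noncomputable def ord2 (q : ℚ) : WithTop ℤ :=
  if q = 0 then ⊤ else (padicValRat 2 q : WithTop ℤ)

lemma ord2_coe {q : ℚ} (h : q ≠ 0) : ord2 q = (padicValRat 2 q : WithTop ℤ) := if_neg h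

lemma ord2_neg (q : ℚ) : ord2 (-q) = ord2 q := by
  unfold ord2
  rcases eq_or_ne q 0 with h | h
  · simp [h]
  · rw [if_neg h, if_neg (neg_ne_zero.mpr h), padicValRat.neg]

/-- Ultrametric consequence: if `ord2 (b - a) < ord2 (c - a)` then
`ord2 (c - b) = ord2 (b - a)`. -/
lemma ord2_ultra {a b c : ℚ} (hab : b ≠ a) (h : ord2 (b - a) < ord2 (c - a)) :
    ord2 (c - b) = ord2 (b - a) := by
  rcases eq_or_ne c a with rfl | hca
  · rw [show c - b = -(b - c) by ring, ord2_neg]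
  · have hba : b - a ≠ 0 := sub_ne_zero.mpr hab
    have hca' : c - a ≠ 0 := sub_ne_zero.mpr hca
    have hbc : c ≠ b := by rintro rfl; exact lt_irrefl _ h
    have hcb : c - b ≠ 0 := sub_ne_zero.mpr hbc
    rw [ord2_coe hba, ord2_coe hca'] at h
    have h' : padicValRat 2 (b - a) < padicValRat 2 (c - a) := by exact_mod_cast h
    have hq : padicValRat 2 (a - b) = padicValRat 2 (b - a) := by
      rw [show a - b = -(b - a) by ring, padicValRat.neg]
    have hqr : (a - b) + (c - a) ≠ 0 := by
      rw [show (a - b) + (c - a) = c - b by ring]; exact hcb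
    have h2 := padicValRat.add_eq_of_lt (p := 2) hqr
      (by rw [show a - b = -(b - a) by ring]; exact neg_ne_zero.mpr hba) hca'
      (by rw [hq]; exact h')
    rw [show (a - b) + (c - a) = c - b by ring] at h2
    rw [ord2_coe hcb, ord2_coe hba]
    exact_mod_cast h2.trans hq

/-- Let S ⊆ ℚ be a set such that for every a ∈ S the set
{ord₂(b − a) : b ∈ S, b ≠ a} ⊆ ℤ is unbounded from above, and let (X, ⪯) be a totally
ordered set. If there exists a binary bijection f : S → X, then X has no isolated points. -/
theorem stmt_3 {X : Type*} [LinearOrder X] [TopologicalSpace X] [OrderTopology X]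
    (S : Set ℚ)
    (hS : ∀ a ∈ S, ¬ BddAbove {n : ℤ | ∃ b ∈ S, b ≠ a ∧ ord2 (b - a) = (n : WithTop ℤ)})
    (f : S → X) (hbij : Function.Bijective f)
    (hbin : ¬ ∃ a b c : S, f a < f b ∧ f b < f c ∧
      ord2 ((b : ℚ) - (a : ℚ)) = ord2 ((c : ℚ) - (b : ℚ))) :
    ∀ x : X, ¬ IsOpen ({x} : Set X) := by
  have inj := hbij.injective
  -- key consequence of the binary condition
  have key : ∀ a b c : S, ord2 ((b : ℚ) - (a : ℚ)) < ord2 ((c : ℚ) - (a : ℚ)) →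
      ¬(f a < f b ∧ f b < f c) ∧ ¬(f c < f b ∧ f b < f a) := by
    intro a b c hlt
    constructor
    · rintro ⟨h1, h2⟩
      have hab : (b : ℚ) ≠ (a : ℚ) := fun h => h1.ne' (congrArg f (Subtype.ext h))
      exact hbin ⟨a, b, c, h1, h2, (ord2_ultra hab hlt).symm⟩
    · rintro ⟨h1, h2⟩
      have hab : (b : ℚ) ≠ (a : ℚ) := fun h => h2.ne (congrArg f (Subtype.ext h))
      refine hbin ⟨c, b, a, h1, h2, ?_⟩
      rw [show (b : ℚ) - (c : ℚ) = -((c : ℚ) - (b : ℚ)) by ring, ord2_neg,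
        ord2_ultra hab hlt, show (a : ℚ) - (b : ℚ) = -((b : ℚ) - (a : ℚ)) by ring, ord2_neg]
  -- extracting points with large 2-adic order
  have hget : ∀ (a : S) (m : ℤ), ∃ (d : S) (n : ℤ), m < n ∧ (d : ℚ) ≠ (a : ℚ) ∧
      ord2 ((d : ℚ) - (a : ℚ)) = (n : WithTop ℤ) := by
    intro a m
    obtain ⟨n, ⟨b, hbS, hba, hord⟩, hmn⟩ := (not_bddAbove_iff.mp (hS a a.2)) m
    exact ⟨⟨b, hbS⟩, n, hmn, hba, hord⟩
  -- isolated points give minima above / maxima below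
  have hmin : ∀ x : X, IsOpen ({x} : Set X) → (Set.Ioi x).Nonempty →
      ∃ u, IsLeast (Set.Ioi x) u := by
    intro x hx hne
    by_contra hno
    push_neg at hno
    have hglb : IsGLB (Set.Ioi x) x := by
      refine ⟨fun y hy => le_of_lt hy, fun z hz => ?_⟩
      by_contra hzx
      push_neg at hzx
      exact hno z ⟨hzx, hz⟩
    obtain ⟨y, hy1, hy2⟩ := mem_closure_iff.mp (hglb.mem_closure hne) _ hx rfl
    rw [Set.mem_singleton_iff] at hy1
    rw [hy1] at hy2
    exact lt_irrefl _ hy2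
  have hmax : ∀ x : X, IsOpen ({x} : Set X) → (Set.Iio x).Nonempty →
      ∃ u, IsGreatest (Set.Iio x) u := by
    intro x hx hne
    by_contra hno
    push_neg at hno
    have hlub : IsLUB (Set.Iio x) x := by
      refine ⟨fun y hy => le_of_lt hy, fun z hz => ?_⟩
      by_contra hzx
      push_neg at hzx
      exact hno z ⟨hzx, hz⟩
    obtain ⟨y, hy1, hy2⟩ := mem_closure_iff.mp (hlub.mem_closure hne) _ hx rfl
    rw [Set.mem_singleton_iff] at hy1
    rw [hy1] at hy2
    exact lt_irrefl _ hy2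
  intro x hx
  obtain ⟨a, rfl⟩ := hbij.surjective x
  -- passing between the two sides of `f a`
  have above_to_below : (Set.Ioi (f a)).Nonempty → (Set.Iio (f a)).Nonempty := by
    intro hA
    obtain ⟨u, huI, hu⟩ := hmin (f a) hx hA
    obtain ⟨C, rfl⟩ := hbij.surjective u
    have hCa : (C : ℚ) ≠ (a : ℚ) := fun h => huI.ne' (congrArg f (Subtype.ext h))
    have hC2 : ord2 ((C : ℚ) - (a : ℚ)) = (padicValRat 2 ((C : ℚ) - (a : ℚ)) : WithTop ℤ) :=
      ord2_coe (sub_ne_zero.mpr hCa)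
    obtain ⟨d, n, hn, hda, hord⟩ := hget a (padicValRat 2 ((C : ℚ) - (a : ℚ)))
    have hfd : f d ≠ f a := fun h => hda (congrArg Subtype.val (inj h))
    have hltC : ord2 ((C : ℚ) - (a : ℚ)) < ord2 ((d : ℚ) - (a : ℚ)) := by
      rw [hC2, hord]; exact_mod_cast hn
    rcases lt_or_gt_of_ne hfd with h | h
    · exact ⟨f d, h⟩
    · exfalso
      have hCd : f C ≠ f d := fun hq => by
        rw [inj hq] at hltC; exact lt_irrefl _ hltC
      exact (key a C d hltC).1 ⟨huI, lt_of_le_of_ne (hu h) hCd⟩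
  have below_to_above : (Set.Iio (f a)).Nonempty → (Set.Ioi (f a)).Nonempty := by
    intro hB
    obtain ⟨l, hlI, hl⟩ := hmax (f a) hx hB
    obtain ⟨E, rfl⟩ := hbij.surjective l
    have hEa : (E : ℚ) ≠ (a : ℚ) := fun h => hlI.ne (congrArg f (Subtype.ext h))
    have hE2 : ord2 ((E : ℚ) - (a : ℚ)) = (padicValRat 2 ((E : ℚ) - (a : ℚ)) : WithTop ℤ) :=
      ord2_coe (sub_ne_zero.mpr hEa)
    obtain ⟨d, n, hn, hda, hord⟩ := hget a (padicValRat 2 ((E : ℚ) - (a : ℚ)))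
    have hfd : f d ≠ f a := fun h => hda (congrArg Subtype.val (inj h))
    have hltE : ord2 ((E : ℚ) - (a : ℚ)) < ord2 ((d : ℚ) - (a : ℚ)) := by
      rw [hE2, hord]; exact_mod_cast hn
    rcases lt_or_gt_of_ne hfd with h | h
    · exfalso
      have hEd : f d ≠ f E := fun hq => by
        rw [← inj hq] at hltE; exact lt_irrefl _ hltE
      exact (key a E d hltE).2 ⟨lt_of_le_of_ne (hl h) hEd, hlI⟩
    · exact ⟨f d, h⟩
  -- both sides are nonempty
  obtain ⟨d₀, n₀, _, hd₀a, _⟩ := hget a 0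
  have hfd₀ : f d₀ ≠ f a := fun h => hd₀a (congrArg Subtype.val (inj h))
  have hboth : (Set.Ioi (f a)).Nonempty ∧ (Set.Iio (f a)).Nonempty := by
    rcases lt_or_gt_of_ne hfd₀ with h | h
    · exact ⟨below_to_above ⟨f d₀, h⟩, ⟨f d₀, h⟩⟩
    · exact ⟨⟨f d₀, h⟩, above_to_below ⟨f d₀, h⟩⟩
  obtain ⟨hA, hB⟩ := hboth
  obtain ⟨u, huI, hu⟩ := hmin (f a) hx hA
  obtain ⟨C, rfl⟩ := hbij.surjective u
  obtain ⟨l, hlI, hl⟩ := hmax (f a) hx hB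
  obtain ⟨E, rfl⟩ := hbij.surjective l
  have hCa : (C : ℚ) ≠ (a : ℚ) := fun h => huI.ne' (congrArg f (Subtype.ext h))
  have hEa : (E : ℚ) ≠ (a : ℚ) := fun h => hlI.ne (congrArg f (Subtype.ext h))
  have hC2 : ord2 ((C : ℚ) - (a : ℚ)) = (padicValRat 2 ((C : ℚ) - (a : ℚ)) : WithTop ℤ) :=
    ord2_coe (sub_ne_zero.mpr hCa)
  have hE2 : ord2 ((E : ℚ) - (a : ℚ)) = (padicValRat 2 ((E : ℚ) - (a : ℚ)) : WithTop ℤ) :=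
    ord2_coe (sub_ne_zero.mpr hEa)
  obtain ⟨d, n, hn, hda, hord⟩ := hget a
    (max (padicValRat 2 ((C : ℚ) - (a : ℚ))) (padicValRat 2 ((E : ℚ) - (a : ℚ))))
  have hfd : f d ≠ f a := fun h => hda (congrArg Subtype.val (inj h))
  have hltC : ord2 ((C : ℚ) - (a : ℚ)) < ord2 ((d : ℚ) - (a : ℚ)) := by
    rw [hC2, hord]; exact_mod_cast lt_of_le_of_lt (le_max_left _ _) hn
  have hltE : ord2 ((E : ℚ) - (a : ℚ)) < ord2 ((d : ℚ) - (a : ℚ)) := by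
    rw [hE2, hord]; exact_mod_cast lt_of_le_of_lt (le_max_right _ _) hn
  rcases lt_or_gt_of_ne hfd with h | h
  · have hEd : f d ≠ f E := fun hq => by
      rw [← inj hq] at hltE; exact lt_irrefl _ hltE
    exact (key a E d hltE).2 ⟨lt_of_le_of_ne (hl h) hEd, hlI⟩
  · have hCd : f C ≠ f d := fun hq => by
      rw [inj hq] at hltC; exact lt_irrefl _ hltC
    exact (key a C d hltC).1 ⟨huI, lt_of_le_of_ne (hu h) hCd⟩
end

section
/- Let S ⊆ ℚ, let (X, ⪯) be a totally ordered set, let f : S → X be chaotic, and let t be an odd positive integer. Suppose that a ∈ ℚ and d ∈ ℚ, d ≠ 0, are such that a + i·d ∈ S for all nonnegative integers i. Then f(a) ≺ f(a + d) if and only if f(a) ≺ f(a + t·d). -/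
section Chaos

variable {X : Type*} [LinearOrder X]

def NChaotic (g : ℕ → X) : Prop := ∀ i j k : ℕ, i + k = 2*j → ¬(g i < g j ∧ g j < g k)

lemma nchaotic_dual {g : ℕ → X} (h : NChaotic g) :
    NChaotic (fun n => OrderDual.toDual (g n)) := by
  intro i j k hijk hc
  simp only [OrderDual.toDual_lt_toDual] at hc
  exact h k j i (by omega) ⟨hc.2, hc.1⟩

lemma nchaotic_sub {g : ℕ → X} (h : NChaotic g) (a e : ℕ) :
    NChaotic (fun n => g (a + e*n)) := by
  intro i j k hijk hc
  refine h (a + e*i) (a + e*j) (a + e*k) ?_ hc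
  have key : e * i + e * k = 2 * (e * j) := by
    have h2 : e * (i + k) = e * (2 * j) := by rw [hijk]
    rw [Nat.mul_add] at h2
    linarith [h2]
  linarith [key]

lemma nchaotic_alt {g : ℕ → X} (hinj : Function.Injective g) (hch : NChaotic g)
    (h01 : g 0 < g 1) : ∀ n, (Even n → g n < g (n+1)) ∧ (Odd n → g (n+1) < g n) := by
  intro n
  induction n with
  | zero => exact ⟨fun _ => h01, fun h => absurd h (by simp)⟩
  | succ n ih =>
    constructor
    · intro he
      have hn : Odd n := by rcases he with ⟨k, hk⟩; exact ⟨k - 1, by omega⟩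
      have h1 : g (n+1) < g n := ih.2 hn
      have h2 := hch (n+2) (n+1) n (by omega)
      have hne : g (n+1) ≠ g (n+2) := fun h => by simpa using hinj h
      rcases lt_or_gt_of_ne hne with h | h
      · exact h
      · exact absurd ⟨h, h1⟩ h2
    · intro ho
      have hn : Even n := by
        rcases Nat.odd_iff.mp ho with h; exact Nat.even_iff.mpr (by omega)
      have h1 : g n < g (n+1) := ih.1 hn
      have h2 := hch n (n+1) (n+2) (by omega)
      have hne : g (n+2) ≠ g (n+1) := fun h => by simpa using hinj h
      rcases lt_or_gt_of_ne hne with h | h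
      · exact h
      · exact absurd ⟨h1, h⟩ h2

lemma nchaotic_key : ∀ t : ℕ, Odd t → ∀ {X : Type*} [LinearOrder X] (g : ℕ → X),
    Function.Injective g → NChaotic g → g 0 < g 1 → g 0 < g t := by
  intro t
  induction t using Nat.strong_induction_on with
  | _ t IH =>
    intro ht X _ g hinj hch h01
    rcases eq_or_ne t 1 with rfl | ht1
    · exact h01
    have ht3 : 3 ≤ t := by rcases ht with ⟨k, rfl⟩; omega
    by_contra hcon
    push_neg at hcon
    have htne : g t ≠ g 0 := fun h => by have := hinj h; omega
    have ht0 : g t < g 0 := lt_of_le_of_ne hcon htne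
    have alt := nchaotic_alt hinj hch h01
    have h_t1 : g (t+1) < g t := (alt t).2 ht
    -- subsequence h n = g (t + n), dualized
    have hsub : NChaotic (fun n => g (t + n)) := by
      have := nchaotic_sub hch t 1
      simpa using this
    have hdch : NChaotic (fun n => OrderDual.toDual ((fun n => g (t + n)) n)) :=
      nchaotic_dual hsub
    have hdinj : Function.Injective (fun n => OrderDual.toDual (g (t + n))) := by
      intro x y hxy
      simp only [OrderDual.toDual_inj] at hxy
      have := hinj hxy
      omega
    have hd01 : (fun n => OrderDual.toDual (g (t + n))) 0 < (fun n => OrderDual.toDual (g (t + n))) 1 := by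
      simp only [OrderDual.toDual_lt_toDual]
      simpa using h_t1
    have hodd2 : Odd (t - 2) := by rcases ht with ⟨k, rfl⟩; exact ⟨k - 1, by omega⟩
    have hIH := IH (t - 2) (by omega) hodd2
      (fun n => OrderDual.toDual (g (t + n))) hdinj hdch hd01
    have h2t2 : g (t + (t - 2)) < g t := by
      simpa using hIH
    -- AP (t + (t-2), t, 2) : forbids g (2t-2) < g t < g 2
    have hg2t : g 2 < g t := by
      have h2 := hch (t + (t-2)) t 2 (by omega)
      have hne : g 2 ≠ g t := fun h => by have := hinj h; omega
      rcases lt_or_gt_of_ne hne with h | h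
      · exact h
      · exact absurd ⟨h2t2, h⟩ h2
    have hg20 : g 2 < g 0 := hg2t.trans ht0
    -- AP (2t, t, 0) : forbids g (2t) < g t < g 0
    have hg2tt : g t < g (2*t) := by
      have h2 := hch (2*t) t 0 (by omega)
      have hne : g (2*t) ≠ g t := fun h => by have := hinj h; omega
      rcases lt_or_gt_of_ne hne with h | h
      · exact absurd ⟨h, ht0⟩ h2
      · exact h
    -- even chain, dualized
    have hech : NChaotic (fun k => g (0 + 2*k)) := nchaotic_sub hch 0 2
    have hech' : NChaotic (fun k => g (2*k)) := by simpa using hech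
    have hedch : NChaotic (fun k => OrderDual.toDual (g (2*k))) := nchaotic_dual hech'
    have hedinj : Function.Injective (fun k => OrderDual.toDual (g (2*k))) := by
      intro x y hxy
      simp only [OrderDual.toDual_inj] at hxy
      have := hinj hxy
      omega
    have hed01 : (fun k => OrderDual.toDual (g (2*k))) 0 < (fun k => OrderDual.toDual (g (2*k))) 1 := by
      simp only [OrderDual.toDual_lt_toDual]
      simpa using hg20
    have ealt := nchaotic_alt hedinj hedch hed01
    have heven : Even (t - 1) := by rcases ht with ⟨k, rfl⟩; exact ⟨k, by omega⟩
    have hlast := (ealt (t - 1)).1 heven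
    simp only [OrderDual.toDual_lt_toDual] at hlast
    -- hlast : g (2*((t-1)+1)) < g (2*(t-1))
    have heq1 : 2*((t-1)+1) = 2*t := by omega
    have heq2 : 2*(t-1) = t + (t-2) := by omega
    rw [heq1, heq2] at hlast
    exact absurd (hlast.trans (h2t2.trans hg2tt)) (lt_irrefl _)

end Chaos

/-- Let S ⊆ ℚ, let (X, ⪯) be a totally ordered set, let f : S → X be chaotic,
and let t be an odd positive integer. Suppose a ∈ ℚ and d ∈ ℚ, d ≠ 0, are such that
a + i·d ∈ S for all nonnegative integers i. Then f(a) ≺ f(a + d) iff f(a) ≺ f(a + t·d). -/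
theorem stmt_4 {X : Type*} [LinearOrder X] (S : Set ℚ) (f : S → X)
    (hinj : Function.Injective f)
    (hch : ¬ ∃ a b c : S, f a < f b ∧ f b < f c ∧ (b : ℚ) - (a : ℚ) = (c : ℚ) - (b : ℚ))
    (t : ℕ) (htpos : 0 < t) (ht : Odd t)
    (a d : ℚ) (hd : d ≠ 0) (hmem : ∀ i : ℕ, a + (i : ℚ) * d ∈ S) :
    f ⟨a, by simpa using hmem 0⟩ < f ⟨a + d, by simpa using hmem 1⟩ ↔
      f ⟨a, by simpa using hmem 0⟩ < f ⟨a + (t : ℚ) * d, hmem t⟩ := by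
  push_neg at hch
  set G : ℕ → X := fun i => f ⟨a + (i : ℚ) * d, hmem i⟩ with hG
  have hGinj : Function.Injective G := by
    intro x y hxy
    have := hinj hxy
    have hval : a + (x : ℚ) * d = a + (y : ℚ) * d := congrArg Subtype.val this
    have h2 : (x : ℚ) * d = (y : ℚ) * d := by linarith
    have h3 : (x : ℚ) = (y : ℚ) := mul_right_cancel₀ hd h2
    exact_mod_cast h3
  have hGch : NChaotic G := by
    intro i j k hijk hc
    refine hch ⟨a + (i:ℚ)*d, hmem i⟩ ⟨a + (j:ℚ)*d, hmem j⟩ ⟨a + (k:ℚ)*d, hmem k⟩ hc.1 hc.2 ?_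
    have hq : (i : ℚ) + (k : ℚ) = 2 * (j : ℚ) := by exact_mod_cast hijk
    push_cast
    linear_combination (-d) * hq
  have hG0 : f ⟨a, by simpa using hmem 0⟩ = G 0 := by
    apply congrArg f
    apply Subtype.ext
    push_cast
    ring
  have hG1 : f ⟨a + d, by simpa using hmem 1⟩ = G 1 := by
    apply congrArg f
    apply Subtype.ext
    push_cast
    ring
  have hGt : f ⟨a + (t : ℚ) * d, hmem t⟩ = G t := rfl
  rw [hG0, hG1, hGt]
  constructor
  · intro h
    exact nchaotic_key t ht G hGinj hGch h
  · intro h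
    by_contra hcon
    push_neg at hcon
    have hne : G 1 ≠ G 0 := fun hh => by have := hGinj hh; omega
    have h10 : G 1 < G 0 := lt_of_le_of_ne hcon hne
    -- dualize
    have hdch : NChaotic (fun n => OrderDual.toDual (G n)) := nchaotic_dual hGch
    have hdinj : Function.Injective (fun n => OrderDual.toDual (G n)) := by
      intro x y hxy
      simp only [OrderDual.toDual_inj] at hxy
      exact hGinj hxy
    have hd01 : (fun n => OrderDual.toDual (G n)) 0 < (fun n => OrderDual.toDual (G n)) 1 := by
      simp only [OrderDual.toDual_lt_toDual]
      exact h10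
    have := nchaotic_key t ht (fun n => OrderDual.toDual (G n)) hdinj hdch hd01
    simp only [OrderDual.toDual_lt_toDual] at this
    exact absurd h (not_lt_of_gt this)
end

section
/- Let S ⊆ ℚ, let (X, ⪯) be a totally ordered set, let f : S → X be chaotic, let s be an even nonnegative integer, and let t be an odd positive integer. Suppose that a ∈ ℚ and d ∈ ℚ, d ≠ 0, are such that a + i·d ∈ S for all nonnegative integers i. Then f(a) ≺ f(a + d) if and only if f(a + s·d) ≺ f(a + t·d). -/
lemma chaos_key {X : Type*} [LinearOrder X] (G : ℕ → X)
    (hne : ∀ i j : ℕ, i ≠ j → G i ≠ G j)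
    (hmid : ∀ i j k : ℕ, i + k = 2*j → (G i < G j ↔ G k < G j))
    (h01 : G 0 < G 1) :
    ∀ k : ℕ, Odd k → ∀ s t : ℕ, Even s → Odd t → (t = s + k ∨ s = t + k) → G s < G t := by
  have flip : ∀ i j : ℕ, i ≠ j → ¬ G i < G j → G j < G i := fun i j hij h =>
    ((hne i j hij).lt_or_gt).resolve_left h
  have alt : ∀ m : ℕ, G (2*m) < G (2*m+1) ∧ G (2*m+2) < G (2*m+1) := by
    intro m
    induction m with
    | zero =>
      refine ⟨by simpa using h01, ?_⟩
      have h2 := (hmid 0 1 2 (by omega)).mp (by simpa using h01)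
      simpa using h2
    | succ n ihn =>
      have e1 : G (2*n+2) < G (2*n+3) := by
        have hiff := hmid (2*n+1) (2*n+2) (2*n+3) (by omega)
        exact flip _ _ (by omega) (fun hc => lt_asymm ihn.2 (hiff.mpr hc))
      have e2 : G (2*n+4) < G (2*n+3) := (hmid (2*n+2) (2*n+3) (2*n+4) (by omega)).mp e1
      constructor
      · rw [show 2*(n+1)+1 = 2*n+3 from by ring, show 2*(n+1) = 2*n+2 from by ring]
        exact e1
      · rw [show 2*(n+1)+2 = 2*n+4 from by ring, show 2*(n+1)+1 = 2*n+3 from by ring]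
        exact e2
  have zig : ∀ u : ℕ, G u < G (u+2) →
      ∀ m : ℕ, G (u+4*m) < G (u+4*m+2) ∧ G (u+4*m+4) < G (u+4*m+2) := by
    intro u hu m
    induction m with
    | zero =>
      refine ⟨by simpa using hu, ?_⟩
      have := (hmid u (u+2) (u+4) (by omega)).mp hu
      simpa using this
    | succ n ihn =>
      have e1 : G (u+4*n+4) < G (u+4*n+6) := by
        have hiff := hmid (u+4*n+2) (u+4*n+4) (u+4*n+6) (by omega)
        exact flip _ _ (by omega) (fun hc => lt_asymm ihn.2 (hiff.mpr hc))
      have e2 : G (u+4*n+8) < G (u+4*n+6) :=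
        (hmid (u+4*n+4) (u+4*n+6) (u+4*n+8) (by omega)).mp e1
      constructor
      · rw [show u+4*(n+1)+2 = u+4*n+6 from by ring, show u+4*(n+1) = u+4*n+4 from by ring]
        exact e1
      · rw [show u+4*(n+1)+4 = u+4*n+8 from by ring, show u+4*(n+1)+2 = u+4*n+6 from by ring]
        exact e2
  intro k
  induction k using Nat.strong_induction_on with
  | _ k IH =>
  intro hk s t hs ht hst
  obtain ⟨j, hj⟩ := hk
  subst hj
  cases j with
  | zero =>
    obtain ⟨m, hm⟩ := hs
    rcases hst with h | h
    · rw [show s = 2*m from by omega, show t = 2*m+1 from by omega]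
      exact (alt m).1
    · obtain ⟨m', hm'⟩ := ht
      rw [show s = 2*m'+2 from by omega, show t = 2*m'+1 from by omega]
      exact (alt m').2
  | succ j' =>
    have IH' := IH (2*j'+1) (by omega) ⟨j', rfl⟩
    have hstne : s ≠ t := by
      intro h
      rw [Nat.even_iff] at hs
      rw [Nat.odd_iff] at ht
      omega
    by_contra hcon
    have hts : G t < G s := flip s t hstne hcon
    have h1 : G t < G (t+2) := by
      rcases hst with h | h
      · have hA : G s < G (t-2) :=
          IH' s (t-2) hs (by rw [Nat.odd_iff] at ht ⊢; omega) (Or.inl (by omega))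
        have h0 : G t < G (t-2) := hts.trans hA
        have hiff := hmid (t-2) t (t+2) (by omega)
        exact flip _ _ (by omega) (fun hc => lt_asymm h0 (hiff.mpr hc))
      · have hA : G s < G (t+2) :=
          IH' s (t+2) hs (by rw [Nat.odd_iff] at ht ⊢; omega) (Or.inr (by omega))
        exact hts.trans hA
    have h2 : G (t+(4*j'+6)) < G (t+(2*j'+3)) := by
      rcases hst with h | h
      · have hiff := hmid s t (t+(2*j'+3)) (by omega)
        have hb : G t < G (t+(2*j'+3)) :=
          flip _ _ (by omega) (fun hc => lt_asymm hts (hiff.mpr hc))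
        exact (hmid t (t+(2*j'+3)) (t+(4*j'+6)) (by omega)).mp hb
      · have hiff := hmid t s (t+(4*j'+6)) (by omega)
        have hb := hiff.mp hts
        rw [h] at hb
        exact hb
    have h3 : G (t+4*(j'+1)) < G (t+4*(j'+1)+2) := (zig t h1 (j'+1)).1
    rw [show t+4*(j'+1) = t+(4*j'+4) from by ring,
        show t+(4*j'+4)+2 = t+(4*j'+6) from by ring] at h3
    have h4 : G (t+(2*j'+3)) < G (t+(4*j'+4)) :=
      IH' (t+(2*j'+3)) (t+(4*j'+4))
        (by rw [Nat.even_iff]; rw [Nat.odd_iff] at ht; omega)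
        (by rw [Nat.odd_iff] at ht ⊢; omega)
        (Or.inl (by omega))
    exact lt_irrefl _ (h2.trans (h4.trans h3))

/-- Let S ⊆ ℚ, let (X, ⪯) be a totally ordered set, let f : S → X be chaotic,
let s be an even nonnegative integer, and let t be an odd positive integer. Suppose a ∈ ℚ
and d ∈ ℚ, d ≠ 0, are such that a + i·d ∈ S for all nonnegative integers i. Then
f(a) ≺ f(a + d) iff f(a + s·d) ≺ f(a + t·d). -/
theorem stmt_5 {X : Type*} [LinearOrder X] (S : Set ℚ) (f : S → X)
    (hinj : Function.Injective f)
    (hch : ¬ ∃ a b c : S, f a < f b ∧ f b < f c ∧ (b : ℚ) - (a : ℚ) = (c : ℚ) - (b : ℚ))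
    (s : ℕ) (hs : Even s) (t : ℕ) (htpos : 0 < t) (ht : Odd t)
    (a d : ℚ) (hd : d ≠ 0) (hmem : ∀ i : ℕ, a + (i : ℚ) * d ∈ S) :
    f ⟨a, by simpa using hmem 0⟩ < f ⟨a + d, by simpa using hmem 1⟩ ↔
      f ⟨a + (s : ℚ) * d, hmem s⟩ < f ⟨a + (t : ℚ) * d, hmem t⟩ := by
  set G : ℕ → X := fun n => f ⟨a + (n : ℚ) * d, hmem n⟩ with hG
  have hne : ∀ i j : ℕ, i ≠ j → G i ≠ G j := by
    intro i j hij hGij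
    apply hij
    have hsub := hinj hGij
    have hval : a + (i:ℚ)*d = a + (j:ℚ)*d := congrArg Subtype.val hsub
    have h2 : (i:ℚ)*d = (j:ℚ)*d := by linarith
    have h3 : (i:ℚ) = (j:ℚ) := mul_right_cancel₀ hd h2
    exact_mod_cast h3
  have flip : ∀ i j : ℕ, i ≠ j → ¬ G i < G j → G j < G i := fun i j hij h =>
    ((hne i j hij).lt_or_gt).resolve_left h
  have hmid : ∀ i j k : ℕ, i + k = 2*j → (G i < G j ↔ G k < G j) := by
    intro i j k hijk
    by_cases hik : i = k
    · subst hik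
      have hij : i = j := by omega
      subst hij
      exact Iff.rfl
    · have hijq : (i:ℚ) + (k:ℚ) = 2*(j:ℚ) := by exact_mod_cast hijk
      have hkj : k ≠ j := by omega
      have hij : i ≠ j := by omega
      constructor
      · intro h
        by_contra hc
        have h2 : G j < G k := flip k j hkj hc
        exact hch ⟨⟨a+(i:ℚ)*d, hmem i⟩, ⟨a+(j:ℚ)*d, hmem j⟩, ⟨a+(k:ℚ)*d, hmem k⟩, h, h2, by
          show (a+(j:ℚ)*d) - (a+(i:ℚ)*d) = (a+(k:ℚ)*d) - (a+(j:ℚ)*d)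
          linear_combination (-d) * hijq⟩
      · intro h
        by_contra hc
        have h2 : G j < G i := flip i j hij hc
        exact hch ⟨⟨a+(k:ℚ)*d, hmem k⟩, ⟨a+(j:ℚ)*d, hmem j⟩, ⟨a+(i:ℚ)*d, hmem i⟩, h, h2, by
          show (a+(j:ℚ)*d) - (a+(k:ℚ)*d) = (a+(i:ℚ)*d) - (a+(j:ℚ)*d)
          linear_combination (-d) * hijq⟩
  have e0 : f (⟨a, by simpa using hmem 0⟩ : S) = G 0 :=
    congrArg f (Subtype.ext (by push_cast; ring))
  have e1 : f (⟨a + d, by simpa using hmem 1⟩ : S) = G 1 :=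
    congrArg f (Subtype.ext (by push_cast; ring))
  rw [e0, e1]
  have hkey := chaos_key G hne hmid
  constructor
  · intro h01
    rcases Nat.lt_or_ge s t with hlt | hge
    · exact hkey h01 (t - s)
        (by rw [Nat.even_iff] at hs; rw [Nat.odd_iff] at ht ⊢; omega)
        s t hs ht (Or.inl (by omega))
    · exact hkey h01 (s - t)
        (by rw [Nat.even_iff] at hs; rw [Nat.odd_iff] at ht ⊢; omega)
        s t hs ht (Or.inr (by omega))
  · intro h
    by_contra hc
    have h10 : G 1 < G 0 := flip 0 1 (by omega) hc
    have hmid' : ∀ i j k : ℕ, i + k = 2*j → (G j < G i ↔ G j < G k) := by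
      intro i j k hijk
      by_cases hik : i = k
      · subst hik; exact Iff.rfl
      · have hij : i ≠ j := by omega
        have hkj : k ≠ j := by omega
        constructor
        · intro hji
          exact flip k j hkj (fun hc2 => lt_asymm hji ((hmid i j k hijk).mpr hc2))
        · intro hjk
          exact flip i j hij (fun hc2 => lt_asymm hjk ((hmid i j k hijk).mp hc2))
    have hkey' := chaos_key (fun n => OrderDual.toDual (G n))
      (fun i j hij h' => hne i j hij (OrderDual.toDual.injective h'))
      (fun i j k hijk => by simpa using hmid' i j k hijk)
      (by simpa using h10)
    have hdual : OrderDual.toDual (G s) < OrderDual.toDual (G t) := by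
      rcases Nat.lt_or_ge s t with hlt | hge
      · exact hkey' (t - s)
          (by rw [Nat.even_iff] at hs; rw [Nat.odd_iff] at ht ⊢; omega)
          s t hs ht (Or.inl (by omega))
      · exact hkey' (s - t)
          (by rw [Nat.even_iff] at hs; rw [Nat.odd_iff] at ht ⊢; omega)
          s t hs ht (Or.inr (by omega))
    have h2 : G t < G s := by simpa using hdual
    exact lt_asymm h h2
end

section
/- Let (X, ⪯) be a totally ordered set. Every chaotic map f : ℕ → X is binary. -/
section Core
variable {X : Type*} [LinearOrder X] (g : ℕ → X)

def Pp (g : ℕ → X) (p t : ℕ) : Prop := g p < g (p + t)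

variable (hinj : Function.Injective g)
  (hch : ∀ a b c : ℕ, g a < g b → g b < g c → (b:ℤ) - (a:ℤ) ≠ (c:ℤ) - (b:ℤ))

include hinj hch in
lemma alt (p t : ℕ) (ht : 0 < t) : Pp g p t ↔ ¬ Pp g (p+t) t := by
  unfold Pp
  constructor
  · intro h1 h2
    exact hch p (p+t) (p+t+t) h1 h2 (by push_cast; ring)
  · intro h2
    rcases lt_trichotomy (g p) (g (p+t)) with h|h|h
    · exact h
    · exact absurd (hinj h) (by omega)
    · exfalso
      rcases lt_trichotomy (g (p+t)) (g (p+t+t)) with h'|h'|h'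
      · exact h2 h'
      · exact absurd (hinj h') (by omega)
      · exact hch (p+t+t) (p+t) p h' h (by push_cast; ring)

include hinj hch in
lemma base1 (j : ℕ) : Pp g (2*j) 1 ↔ Pp g 0 1 := by
  induction j with
  | zero => norm_num
  | succ j ih =>
    have h1 := alt g hinj hch (2*j) 1 one_pos
    have h2 := alt g hinj hch (2*j+1) 1 one_pos
    have e1 : 2*(j+1) = (2*j+1)+1 := by ring
    have e2 : (2*j)+1 = 2*j+1 := rfl
    rw [e1]
    rw [e2] at h1
    tauto

include hinj hch in
lemma alt2iter (j : ℕ) : ∀ x : ℕ,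
    (Even j → (Pp g (x + 2*j) 2 ↔ Pp g x 2)) ∧
    (Odd j → (Pp g (x + 2*j) 2 ↔ ¬ Pp g x 2)) := by
  induction j with
  | zero => intro x; simp
  | succ j ih =>
    intro x
    have hx := alt g hinj hch x 2 two_pos
    have hj := ih (x+2)
    have e1 : x + 2*(j+1) = (x+2) + 2*j := by ring
    rw [e1]
    constructor
    · intro hev
      have hodd : Odd j := by
        rw [Nat.even_iff] at hev; rw [Nat.odd_iff]; omega
      have := hj.2 hodd
      tauto
    · intro hod
      have hev : Even j := by
        rw [Nat.odd_iff] at hod; rw [Nat.even_iff]; omega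
      have := hj.1 hev
      tauto

include hinj in
lemma notlt (p t : ℕ) (ht : 0 < t) (h : ¬ Pp g p t) : g (p+t) < g p := by
  rcases lt_trichotomy (g p) (g (p+t)) with h'|h'|h'
  · exact absurd h' h
  · exact absurd (hinj h') (by omega)
  · exact h'

include hinj hch in
lemma mainL : ∀ d, Odd d → ∀ x, Even x → (Pp g x d ↔ Pp g 0 1) := by
  intro d
  induction d using Nat.strong_induction_on with
  | _ d IH =>
  intro hd x hx
  rcases eq_or_ne d 1 with rfl|hd1
  · obtain ⟨j, hj⟩ := hx
    have : x = 2*j := by omega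
    rw [this]; exact base1 g hinj hch j
  have hd3 : 3 ≤ d := by
    rw [Nat.odd_iff] at hd; omega
  set e := d - 2 with he
  have hde : d = e + 2 := by omega
  have hepos : 0 < e := by omega
  have heodd : Odd e := by rw [Nat.odd_iff] at *; omega
  have helt : e < d := by omega
  have dpos : 0 < d := by omega
  have SubB : ∀ y : ℕ, Even y → ¬(Pp g y d ↔ Pp g 0 1) → ¬(Pp g y 2 ↔ Pp g 0 1) := by
    intro y hy hbad hiff
    have h2 : Pp g (y+2) e ↔ Pp g 0 1 := by
      refine IH e helt heodd (y+2) ?_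
      rw [Nat.even_iff] at *; omega
    have e2 : y+2+e = y+d := by omega
    by_cases hep : Pp g 0 1
    · have hyd : ¬ Pp g y d := by tauto
      have h1 : g (y+d) < g y := notlt g hinj y d dpos hyd
      have h3 : g (y+2) < g (y+d) := by
        have := h2.mpr hep
        unfold Pp at this; rwa [e2] at this
      have h4 : Pp g y 2 := hiff.mpr hep
      unfold Pp at h4
      exact absurd (h3.trans h1) (not_lt.mpr h4.le)
    · have hyd : Pp g y d := by tauto
      have h1 : g y < g (y+d) := hyd
      have h3 : g (y+d) < g (y+2) := by
        have := notlt g hinj (y+2) e hepos (by tauto)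
        rwa [e2] at this
      have h4 : Pp g y 2 := h1.trans h3
      exact hep (hiff.mp h4)
  by_contra hbadx
  have hbad2 : ¬(Pp g (x+2*d) d ↔ Pp g 0 1) := by
    have a1 := alt g hinj hch x d dpos
    have a2 := alt g hinj hch (x+d) d dpos
    have e3 : x+d+d = x+2*d := by omega
    rw [e3] at a2
    tauto
  have s1 := SubB x hx hbadx
  have s2 := SubB (x+2*d) (by rw [Nat.even_iff] at *; omega) hbad2
  have it := (alt2iter g hinj hch d x).2 hd
  tauto

include hinj hch in
lemma unif (eo : ℕ) (o : ℕ) (he : Even eo) (ho : Odd o) :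
    (g eo < g o ↔ Pp g 0 1) := by
  have hne : eo ≠ o := by
    rw [Nat.even_iff] at he; rw [Nat.odd_iff] at ho; omega
  rcases lt_or_gt_of_ne hne with h|h
  · have ht : Odd (o - eo) := by
      rw [Nat.even_iff] at he; rw [Nat.odd_iff] at *; omega
    have := mainL g hinj hch (o - eo) ht eo he
    unfold Pp at this
    have e1 : eo + (o - eo) = o := by omega
    rwa [e1] at this
  · have ht : Odd (eo - o) := by
      rw [Nat.even_iff] at he; rw [Nat.odd_iff] at *; omega
    have htpos : 0 < eo - o := by omega
    have a1 := alt g hinj hch o (eo - o) htpos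
    have e1 : o + (eo - o) = eo := by omega
    rw [e1] at a1
    have h2 : Pp g eo (eo - o) ↔ Pp g 0 1 := mainL g hinj hch (eo - o) ht eo he
    -- a1 : Pp g o (eo-o) ↔ ¬ Pp g eo (eo-o)
    have h3 : Pp g o (eo - o) ↔ ¬ Pp g 0 1 := by tauto
    unfold Pp at h3
    rw [e1] at h3
    -- h3 : g o < g eo ↔ ¬ ε
    constructor
    · intro hlt
      by_contra hc
      exact absurd hlt (not_lt.mpr (h3.mpr hc).le)
    · intro hep
      have hnlt : ¬ g o < g eo := fun hc => (h3.mp hc) hep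
      rcases lt_trichotomy (g eo) (g o) with h'|h'|h'
      · exact h'
      · exact absurd (hinj h') hne
      · exact absurd h' hnlt

include hinj hch in
lemma core (A B C : ℕ) (hAB : g A < g B) (hBC : g B < g C)
    (h1 : A % 2 ≠ B % 2) (h2 : B % 2 ≠ C % 2) : False := by
  rcases Nat.even_or_odd B with hB|hB
  · have hA : Odd A := by rw [Nat.even_iff] at hB; rw [Nat.odd_iff]; omega
    have hC : Odd C := by rw [Nat.even_iff] at hB; rw [Nat.odd_iff]; omega
    have u1 := unif g hinj hch B A hB hA
    have u2 := unif g hinj hch B C hB hC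
    have : ¬ (g B < g A) := not_lt.mpr hAB.le
    tauto
  · have hA : Even A := by rw [Nat.odd_iff] at hB; rw [Nat.even_iff]; omega
    have hC : Even C := by rw [Nat.odd_iff] at hB; rw [Nat.even_iff]; omega
    have u1 := unif g hinj hch A B hA hB
    have u2 := unif g hinj hch C B hC hB
    have : ¬ (g C < g B) := not_lt.mpr hBC.le
    tauto

end Core


/-- Let (X, ⪯) be a totally ordered set. Every chaotic map f : ℕ → X is
binary. -/
theorem stmt_6 {X : Type*} [LinearOrder X] (f : ℕ → X)
    (hinj : Function.Injective f)
    (hch : ¬ ∃ a b c : ℕ, f a < f b ∧ f b < f c ∧ (b : ℚ) - (a : ℚ) = (c : ℚ) - (b : ℚ)) :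
    Function.Injective f ∧
      ¬ ∃ a b c : ℕ, f a < f b ∧ f b < f c ∧
        ord2 ((b : ℚ) - (a : ℚ)) = ord2 ((c : ℚ) - (b : ℚ)) := by
  refine ⟨hinj, ?_⟩
  rintro ⟨a, b, c, hab, hbc, hord⟩
  have hchZ : ∀ p q s : ℕ, f p < f q → f q < f s → (q:ℤ) - (p:ℤ) ≠ (s:ℤ) - (q:ℤ) := by
    intro p q s h1 h2 heq
    refine hch ⟨p, q, s, h1, h2, ?_⟩
    have := congrArg (fun z : ℤ => (z : ℚ)) heq
    push_cast at this
    exact this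
  have hne1 : a ≠ b := by rintro rfl; exact lt_irrefl _ hab
  have hne2 : b ≠ c := by rintro rfl; exact lt_irrefl _ hbc
  have hq1 : ((b:ℚ) - a) ≠ 0 := by
    intro h
    apply hne1
    have : (a:ℚ) = b := by linarith [sub_eq_zero.mp h]
    exact_mod_cast this
  have hq2 : ((c:ℚ) - b) ≠ 0 := by
    intro h
    apply hne2
    have : (b:ℚ) = c := by linarith [sub_eq_zero.mp h]
    exact_mod_cast this
  unfold ord2 at hord
  rw [if_neg hq1, if_neg hq2] at hord
  have hv : padicValRat 2 ((b:ℚ) - a) = padicValRat 2 ((c:ℚ) - b) := by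
    exact_mod_cast hord
  set n : ℤ := (b:ℤ) - (a:ℤ) with hn_def
  set m : ℤ := (c:ℤ) - (b:ℤ) with hm_def
  have hn : n ≠ 0 := by
    simp only [hn_def, sub_ne_zero]
    exact_mod_cast hne1.symm
  have hm : m ≠ 0 := by
    simp only [hm_def, sub_ne_zero]
    exact_mod_cast hne2.symm
  have e1 : ((b:ℚ) - a) = ((n : ℤ) : ℚ) := by rw [hn_def]; push_cast; ring
  have e2 : ((c:ℚ) - b) = ((m : ℤ) : ℚ) := by rw [hm_def]; push_cast; ring
  rw [e1, e2, padicValRat.of_int, padicValRat.of_int] at hv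
  have hvI : padicValInt 2 n = padicValInt 2 m := by exact_mod_cast hv
  have hvN : padicValNat 2 n.natAbs = padicValNat 2 m.natAbs := hvI
  have hnabs : n.natAbs ≠ 0 := Int.natAbs_ne_zero.mpr hn
  have hmabs : m.natAbs ≠ 0 := Int.natAbs_ne_zero.mpr hm
  obtain ⟨k, hk⟩ : ∃ k, padicValNat 2 n.natAbs = k := ⟨_, rfl⟩
  have hk' : padicValNat 2 m.natAbs = k := by rw [← hvN]; exact hk
  have hdnN : (2:ℕ)^k ∣ n.natAbs := by rw [← hk]; exact pow_padicValNat_dvd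
  have hdmN : (2:ℕ)^k ∣ m.natAbs := by rw [← hk']; exact pow_padicValNat_dvd
  have hndnN : ¬ (2:ℕ)^(k+1) ∣ n.natAbs := by
    rw [← hk]; exact pow_succ_padicValNat_not_dvd hnabs
  have hndmN : ¬ (2:ℕ)^(k+1) ∣ m.natAbs := by
    rw [← hk']; exact pow_succ_padicValNat_not_dvd hmabs
  have hdn : (2:ℤ)^k ∣ n := by
    have h2 := Int.natCast_dvd_natCast.mpr hdnN
    rw [Int.dvd_natAbs] at h2; push_cast at h2; exact h2
  have hdm : (2:ℤ)^k ∣ m := by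
    have h2 := Int.natCast_dvd_natCast.mpr hdmN
    rw [Int.dvd_natAbs] at h2; push_cast at h2; exact h2
  have hndn : ¬ (2:ℤ)^(k+1) ∣ n := by
    intro hd
    apply hndnN
    have h2 : ((2^(k+1) : ℕ) : ℤ) ∣ ((n.natAbs : ℕ) : ℤ) := by
      rw [Int.dvd_natAbs]; push_cast; exact hd
    exact_mod_cast h2
  have hndm : ¬ (2:ℤ)^(k+1) ∣ m := by
    intro hd
    apply hndmN
    have h2 : ((2^(k+1) : ℕ) : ℤ) ∣ ((m.natAbs : ℕ) : ℤ) := by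
      rw [Int.dvd_natAbs]; push_cast; exact hd
    exact_mod_cast h2
  obtain ⟨D, hDd⟩ : ∃ D : ℕ, 2^k = D := ⟨_, rfl⟩
  have hD : 0 < D := by rw [← hDd]; positivity
  have hDZ : ((D:ℕ):ℤ) = (2:ℤ)^k := by rw [← hDd]; push_cast; ring
  have hmod_ab : a % D = b % D := by
    refine Nat.modEq_iff_dvd.mpr ?_
    rw [hDZ]
    exact hdn
  have hmod_bc : b % D = c % D := by
    refine Nat.modEq_iff_dvd.mpr ?_
    rw [hDZ]
    exact hdm
  obtain ⟨r, hr⟩ : ∃ r, a % D = r := ⟨_, rfl⟩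
  obtain ⟨A, hA⟩ : ∃ A, a / D = A := ⟨_, rfl⟩
  obtain ⟨B, hB⟩ : ∃ B, b / D = B := ⟨_, rfl⟩
  obtain ⟨C, hC⟩ : ∃ C, c / D = C := ⟨_, rfl⟩
  have haA : r + D * A = a := by
    have h0 := Nat.div_add_mod a D; rw [hA, hr] at h0; omega
  have hbB : r + D * B = b := by
    have h0 := Nat.div_add_mod b D
    have h1 : b % D = r := by rw [← hmod_ab, hr]
    rw [hB, h1] at h0; omega
  have hcC : r + D * C = c := by
    have h0 := Nat.div_add_mod c D
    have h1 : c % D = r := by rw [← hmod_bc, ← hmod_ab, hr]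
    rw [hC, h1] at h0; omega
  have hBA : n = ((D:ℕ):ℤ) * ((B:ℤ) - A) := by
    rw [hn_def, ← haA, ← hbB]; push_cast; ring
  have hCB : m = ((D:ℕ):ℤ) * ((C:ℤ) - B) := by
    rw [hm_def, ← hbB, ← hcC]; push_cast; ring
  have hodd1 : ¬ (2:ℤ) ∣ ((B:ℤ) - A) := by
    rintro ⟨w, hw⟩
    exact hndn ⟨w, by rw [hBA, hw, hDZ]; ring⟩
  have hodd2 : ¬ (2:ℤ) ∣ ((C:ℤ) - B) := by
    rintro ⟨w, hw⟩
    exact hndm ⟨w, by rw [hCB, hw, hDZ]; ring⟩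
  have hp1 : A % 2 ≠ B % 2 := by omega
  have hp2 : B % 2 ≠ C % 2 := by omega
  refine core (fun t => f (r + D * t)) ?_ ?_ A B C ?_ ?_ hp1 hp2
  · intro s1 t1 h
    simp only at h
    exact Nat.eq_of_mul_eq_mul_left hD (by have := hinj h; omega)
  · intro p q s1 h1 h2 heq
    refine hchZ (r+D*p) (r+D*q) (r+D*s1) h1 h2 ?_
    push_cast
    linear_combination ((D:ℕ):ℤ) * heq
  · rw [haA, hbB]; exact hab
  · rw [hbB, hcC]; exact hbc
end

section
/- Let (X, ⪯) be a totally ordered set. Every chaotic map f : ℤ → X is binary. -/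
section Aux

variable {X : Type*} [LinearOrder X]

private lemma lt_of_not_lt_inj {g : ℤ → X} (hinj : Function.Injective g) {s t : ℤ}
    (hne : s ≠ t) (h : ¬ g s < g t) : g t < g s :=
  lt_of_le_of_ne (not_lt.mp h) (fun he => hne (hinj he).symm)

/-- The innermost contradiction: a minimal odd-below-even pair of gap `d ≥ 3` is impossible. -/
private lemma innermost (g : ℤ → X) (hinj : Function.Injective g)
    (hAP : ∀ t e : ℤ, ¬ (g (t - e) < g t ∧ g t < g (t + e)))
    (v u : ℤ) (d : ℕ) (hd : u - v = (d : ℤ)) (hodd : Odd v) (_heven : Even u)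
    (hlt : g v < g u) (h3 : 3 ≤ d) (hdodd : Odd d)
    (hmin : ∀ v' u' : ℤ, Odd v' → Even u' → g v' < g u' → (d : ℤ) ≤ |u' - v'|) : False := by
  have hu : u = v + (d : ℤ) := by omega
  -- key fact from minimality: for 1 ≤ s ≤ d-1, g u < g (v + 2s)
  have keyS : ∀ s : ℤ, 1 ≤ s → s ≤ (d : ℤ) - 1 → g u < g (v + 2 * s) := by
    intro s hs1 hs2
    have hodds : Odd (v + 2 * s) := by
      rcases hodd with ⟨k, hk⟩; exact ⟨k + s, by omega⟩
    have hne : v + 2 * s ≠ u := by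
      intro h
      rcases hdodd with ⟨k, hk⟩
      omega
    by_contra hcon
    have hltvu : g (v + 2 * s) < g u := lt_of_not_lt_inj hinj (fun h => hne h.symm) hcon
    have := hmin (v + 2 * s) u hodds _heven hltvu
    have habs : |u - (v + 2 * s)| ≤ (d : ℤ) - 2 := by
      rw [abs_le]; omega
    omega
  -- key fact 1 : g (v + 2d) < g u, from the AP (v, u, v + 2d)
  have key1 : g (v + 2 * (d : ℤ)) < g u := by
    have h := hAP u (d : ℤ)
    rw [show u - (d : ℤ) = v by omega, show u + (d : ℤ) = v + 2 * (d : ℤ) by omega] at h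
    push_neg at h
    exact lt_of_le_of_ne (h hlt) (fun he => (show v + 2 * (d : ℤ) ≠ u by omega) (hinj he))
  -- flip lemma for the step-2 ladder
  have flip : ∀ t : ℤ, (g t < g (t + 2)) ↔ ¬ (g (t + 2) < g (t + 4)) := by
    intro t
    have h1 := hAP (t + 2) 2
    rw [show t + 2 - 2 = t by ring, show t + 2 + 2 = t + 4 by ring] at h1
    have h2 := hAP (t + 2) (-2)
    rw [show t + 2 - (-2) = t + 4 by ring, show t + 2 + (-2) = t by ring] at h2
    constructor
    · intro h hcon; exact h1 ⟨h, hcon⟩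
    · intro h
      by_contra hcon
      have hba : g (t + 2) < g t := lt_of_not_lt_inj hinj (by omega) hcon
      have hcb : g (t + 4) < g (t + 2) := lt_of_not_lt_inj hinj (by omega) h
      exact h2 ⟨hcb, hba⟩
  -- ladder: g (v + 2s) < g (v + 2s + 2) iff s is even
  have ladder : ∀ s : ℕ, (g (v + 2 * (s : ℤ)) < g (v + 2 * (s : ℤ) + 2) ↔ Even s) := by
    intro s
    induction s with
    | zero =>
      norm_num
      have h12 : g u < g (v + 2 * (1 : ℤ)) := keyS 1 le_rfl (by omega)
      rw [show v + 2 * (1 : ℤ) = v + 2 by ring] at h12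
      exact hlt.trans h12
    | succ k ih =>
      have hf := flip (v + 2 * (k : ℤ))
      have ekk : ((k + 1 : ℕ) : ℤ) = (k : ℤ) + 1 := by push_cast; ring
      rw [ekk, show v + 2 * ((k : ℤ) + 1) = v + 2 * (k : ℤ) + 2 by ring,
        show v + 2 * (k : ℤ) + 2 + 2 = v + 2 * (k : ℤ) + 4 by ring,
        Nat.even_add_one, ← ih]
      constructor
      · intro hb ha; exact (hf.mp ha) hb
      · intro hna
        by_contra hnb
        exact hna (hf.mpr hnb)
  -- conclude at s = d - 1
  have heven : Even (d - 1) := Nat.Odd.sub_odd hdodd odd_one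
  have hfin := (ladder (d - 1)).mpr heven
  have hcast : ((d - 1 : ℕ) : ℤ) = (d : ℤ) - 1 := by
    have : 1 ≤ d := by omega
    push_cast [this]; ring
  rw [hcast, show v + 2 * ((d:ℤ) - 1) + 2 = v + 2 * (d:ℤ) by ring] at hfin
  have h2 : g u < g (v + 2 * ((d : ℤ) - 1)) := keyS ((d:ℤ) - 1) (by omega) le_rfl
  exact absurd (hfin.trans (key1.trans h2)) (lt_irrefl _)

/-- If odd points are local maxima, there is no odd point below an even point. -/
private lemma pairlemma (g : ℤ → X) (hinj : Function.Injective g)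
    (hAP : ∀ t e : ℤ, ¬ (g (t - e) < g t ∧ g t < g (t + e)))
    (hloc : ∀ w : ℤ, Odd w → g (w + 1) < g w ∧ g (w - 1) < g w)
    (v u : ℤ) (hv : Odd v) (hu : Even u) (hlt : g v < g u) : False := by
  classical
  set S : Set ℕ := {n : ℕ | ∃ p q : ℤ, Odd p ∧ Even q ∧ g p < g q ∧ (q - p).natAbs = n} with hS
  have hne : S.Nonempty := ⟨(u - v).natAbs, v, u, hv, hu, hlt, rfl⟩
  obtain ⟨p, q, hp, hq, hpq, hnn⟩ := Nat.sInf_mem hne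
  set d : ℕ := sInf S with hdd
  have hmin : ∀ v' u' : ℤ, Odd v' → Even u' → g v' < g u' → (d : ℤ) ≤ |u' - v'| := by
    intro v' u' hv' hu' hlt'
    have : d ≤ (u' - v').natAbs := Nat.sInf_le ⟨v', u', hv', hu', hlt', rfl⟩
    rw [Int.abs_eq_natAbs]
    exact_mod_cast this
  have hqpodd : Odd (q - p) := hq.sub_odd hp
  have hdodd : Odd d := by
    rw [← hnn]
    exact Int.natAbs_odd.mpr hqpodd
  have hd1 : d ≠ 1 := by
    intro h1
    have : (q - p).natAbs = 1 := by rw [hnn, h1]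
    rcases Int.natAbs_eq_iff.mp this with h | h
    · have := (hloc p hp).1
      rw [show p + 1 = q by omega] at this
      exact absurd (hpq.trans this) (lt_irrefl _)
    · have := (hloc p hp).2
      rw [show p - 1 = q by omega] at this
      exact absurd (hpq.trans this) (lt_irrefl _)
  have h3 : 3 ≤ d := by
    rcases hdodd with ⟨k, hk⟩; omega
  rcases Int.natAbs_eq_iff.mp hnn with h | h
  · exact innermost g hinj hAP p q d h hp hq hpq h3 hdodd hmin
  · -- mirrored case: apply innermost to g ∘ neg
    refine innermost (fun t => g (-t)) (fun s t hst => neg_injective (hinj hst))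
      (fun t e => by
        have := hAP (-t) (-e)
        rw [show -t - -e = -(t - e) by ring, show -t + -e = -(t + e) by ring] at this
        exact this)
      (-p) (-q) d (by omega) hp.neg hq.neg (by simpa using hpq) h3 hdodd ?_
    intro v' u' hv' hu' hlt'
    have := hmin (-v') (-u') hv'.neg hu'.neg (by simpa using hlt')
    rwa [show -u' - -v' = -(u' - v') by ring, abs_neg] at this

/-- Core lemma: a chaotic map on ℤ admits no monotone triple with two odd gaps. -/
private lemma phase_core (g : ℤ → X) (hinj : Function.Injective g)
    (hAP : ∀ t e : ℤ, ¬ (g (t - e) < g t ∧ g t < g (t + e)))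
    (a b c : ℤ) (hab : Odd (b - a)) (hbc : Odd (c - b))
    (h1 : g a < g b) (h2 : g b < g c) : False := by
  -- the step-1 comparison alternates
  have flip1 : ∀ t : ℤ, (g t < g (t + 1)) ↔ ¬ (g (t + 1) < g (t + 2)) := by
    intro t
    have ha1 := hAP (t + 1) 1
    rw [show t + 1 - 1 = t by ring, show t + 1 + 1 = t + 2 by ring] at ha1
    have ha2 := hAP (t + 1) (-1)
    rw [show t + 1 - (-1) = t + 2 by ring, show t + 1 + (-1) = t by ring] at ha2
    constructor
    · intro h hcon; exact ha1 ⟨h, hcon⟩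
    · intro h
      by_contra hcon
      exact ha2 ⟨lt_of_not_lt_inj hinj (by omega) h, lt_of_not_lt_inj hinj (by omega) hcon⟩
  have per2 : ∀ t : ℤ, (g t < g (t + 1)) ↔ (g (t + 2) < g (t + 3)) := by
    intro t
    have ha := flip1 t
    have hb := flip1 (t + 1)
    rw [show t + 1 + 1 = t + 2 by ring, show t + 1 + 2 = t + 3 by ring] at hb
    rw [ha, hb, not_not]
  -- parity-periodicity of the comparison
  have evenc : ∀ t : ℤ, Even t → ((g t < g (t + 1)) ↔ (g 0 < g 1)) := by
    have key : ∀ k : ℤ, (g (2*k) < g (2*k + 1)) ↔ (g 0 < g 1) := by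
      intro k
      induction k using Int.induction_on with
      | zero => norm_num
      | succ i ih =>
        have := per2 (2 * (i : ℤ))
        rw [show 2*(i:ℤ) + 2 = 2*((i:ℤ)+1) by ring, show 2*(i:ℤ) + 3 = 2*((i:ℤ)+1) + 1 by ring]
          at this
        rw [← this]; exact ih
      | pred i ih =>
        have := per2 (2 * (-(i:ℤ) - 1))
        rw [show 2*(-(i:ℤ)-1) + 2 = 2*(-(i:ℤ)) by ring,
          show 2*(-(i:ℤ)-1) + 3 = 2*(-(i:ℤ)) + 1 by ring] at this
        rw [this]; exact ih
    intro t ht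
    obtain ⟨k, hk⟩ := ht
    have := key k
    rw [show 2 * k = t by omega] at this
    exact this
  have oddc : ∀ t : ℤ, Odd t → ((g t < g (t + 1)) ↔ ¬ (g 0 < g 1)) := by
    intro t ht
    have h := flip1 (t - 1)
    rw [show t - 1 + 1 = t by ring, show t - 1 + 2 = t + 1 by ring] at h
    have he := evenc (t - 1) (by rcases ht with ⟨k, hk⟩; exact ⟨k, by omega⟩)
    rw [show t - 1 + 1 = t by ring] at he
    rw [← he, h, not_not]
  by_cases h01 : g 0 < g 1
  · -- odd points are local maxima
    have hloc : ∀ w : ℤ, Odd w → g (w + 1) < g w ∧ g (w - 1) < g w := by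
      intro w hw
      constructor
      · have hnot : ¬ (g w < g (w + 1)) := fun hc => (oddc w hw).mp hc h01
        exact lt_of_not_lt_inj hinj (by omega) hnot
      · have he := evenc (w - 1) (by rcases hw with ⟨k, hk⟩; exact ⟨k, by omega⟩)
        rw [show w - 1 + 1 = w by ring] at he
        exact he.mpr h01
    rcases Int.even_or_odd a with ha | ha
    · -- a even, b odd, c even : use pair (b, c)
      obtain ⟨m, hm⟩ := ha
      obtain ⟨k, hk⟩ := hab
      obtain ⟨l, hl⟩ := hbc
      exact pairlemma g hinj hAP hloc b c ⟨m + k, by omega⟩ ⟨m + k + l + 1, by omega⟩ h2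
    · -- a odd, b even : use pair (a, b)
      obtain ⟨m, hm⟩ := ha
      obtain ⟨k, hk⟩ := hab
      exact pairlemma g hinj hAP hloc a b ⟨m, hm⟩ ⟨m + k + 1, by omega⟩ h1
  · -- even points are local maxima: shift by one
    set G : ℤ → X := fun t => g (t + 1) with hG
    have hinj' : Function.Injective G := fun s t hst => by
      have := hinj hst; omega
    have hAP' : ∀ t e : ℤ, ¬ (G (t - e) < G t ∧ G t < G (t + e)) := by
      intro t e
      have := hAP (t + 1) e
      rw [show t + 1 - e = (t - e) + 1 by ring, show t + 1 + e = (t + e) + 1 by ring] at this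
      exact this
    have hloc' : ∀ w : ℤ, Odd w → G (w + 1) < G w ∧ G (w - 1) < G w := by
      intro w hw
      constructor
      · have he := evenc (w + 1) (by rcases hw with ⟨k, hk⟩; exact ⟨k + 1, by omega⟩)
        have hnot : ¬ (g (w + 1) < g (w + 1 + 1)) := fun hc => h01 (he.mp hc)
        have := lt_of_not_lt_inj hinj (by omega) hnot
        simpa [hG, show w + 1 + 1 = w + 2 by ring] using this
      · have ho := (oddc w hw).mpr h01
        simpa [hG, show w - 1 + 1 = w by ring] using ho
    rcases Int.even_or_odd a with ha | ha
    · -- a even : G-pair (a - 1, b - 1)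
      obtain ⟨m, hm⟩ := ha
      obtain ⟨k, hk⟩ := hab
      refine pairlemma G hinj' hAP' hloc' (a - 1) (b - 1) ⟨m - 1, by omega⟩ ⟨m + k, by omega⟩ ?_
      simpa [hG, show a - 1 + 1 = a by ring, show b - 1 + 1 = b by ring] using h1
    · -- a odd, b even, c odd : G-pair (b - 1, c - 1)
      obtain ⟨m, hm⟩ := ha
      obtain ⟨k, hk⟩ := hab
      obtain ⟨l, hl⟩ := hbc
      refine pairlemma G hinj' hAP' hloc' (b - 1) (c - 1) ⟨m + k, by omega⟩ ⟨m + k + l + 1, by omega⟩ ?_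
      simpa [hG, show b - 1 + 1 = b by ring, show c - 1 + 1 = c by ring] using h2

end Aux

/-- Let (X, ⪯) be a totally ordered set. Every chaotic map f : ℤ → X is
binary. -/
theorem stmt_7 {X : Type*} [LinearOrder X] (f : ℤ → X)
    (hinj : Function.Injective f)
    (hch : ¬ ∃ a b c : ℤ, f a < f b ∧ f b < f c ∧ (b : ℚ) - (a : ℚ) = (c : ℚ) - (b : ℚ)) :
    Function.Injective f ∧
      ¬ ∃ a b c : ℤ, f a < f b ∧ f b < f c ∧
        ord2 ((b : ℚ) - (a : ℚ)) = ord2 ((c : ℚ) - (b : ℚ)) := by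
  refine ⟨hinj, ?_⟩
  rintro ⟨a, b, c, h1, h2, h3⟩
  have hx0 : b - a ≠ 0 := sub_ne_zero.mpr fun h => h1.ne' (congrArg f h)
  have hy0 : c - b ≠ 0 := sub_ne_zero.mpr fun h => h2.ne' (congrArg f h)
  have hxq : (b : ℚ) - (a : ℚ) = ((b - a : ℤ) : ℚ) := by push_cast; ring
  have hyq : (c : ℚ) - (b : ℚ) = ((c - b : ℤ) : ℚ) := by push_cast; ring
  rw [hxq, hyq] at h3
  unfold ord2 at h3
  rw [if_neg (by exact_mod_cast hx0), if_neg (by exact_mod_cast hy0)] at h3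
  have h4 : padicValRat 2 ((b - a : ℤ) : ℚ) = padicValRat 2 ((c - b : ℤ) : ℚ) := by
    exact_mod_cast h3
  rw [padicValRat.of_int, padicValRat.of_int] at h4
  have hn : padicValInt 2 (b - a) = padicValInt 2 (c - b) := by exact_mod_cast h4
  set n := padicValInt 2 (b - a) with hndef
  have hdx : (2 : ℤ) ^ n ∣ (b - a) := by
    exact_mod_cast padicValInt_dvd (p := 2) (b - a)
  have hdy : (2 : ℤ) ^ n ∣ (c - b) := by
    rw [hn]
    exact_mod_cast padicValInt_dvd (p := 2) (c - b)
  obtain ⟨x', hxx⟩ := hdx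
  obtain ⟨y', hyy⟩ := hdy
  have h2n : (2 : ℤ) ^ n ≠ 0 := pow_ne_zero n two_ne_zero
  have hox : Odd x' := by
    rcases Int.even_or_odd x' with ⟨k, hk⟩ | ho
    · exfalso
      have hdvd : ((2 : ℕ) : ℤ) ^ (n + 1) ∣ (b - a) := by
        push_cast
        exact ⟨k, by rw [hxx, hk]; ring⟩
      rcases (padicValInt_dvd_iff (p := 2) (n + 1) (b - a)).mp hdvd with h | h
      · exact hx0 h
      · omega
    · exact ho
  have hoy : Odd y' := by
    rcases Int.even_or_odd y' with ⟨k, hk⟩ | ho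
    · exfalso
      have hdvd : ((2 : ℕ) : ℤ) ^ (n + 1) ∣ (c - b) := by
        push_cast
        exact ⟨k, by rw [hyy, hk]; ring⟩
      rcases (padicValInt_dvd_iff (p := 2) (n + 1) (c - b)).mp hdvd with h | h
      · exact hy0 h
      · rw [← hn] at h
        omega
    · exact ho
  set g : ℤ → X := fun t => f (a + 2 ^ n * t) with hg
  have hginj : Function.Injective g := by
    intro s t hst
    have h := hinj hst
    exact mul_left_cancel₀ h2n (add_left_cancel h)
  have hAP : ∀ t e : ℤ, ¬ (g (t - e) < g t ∧ g t < g (t + e)) := by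
    rintro t e ⟨H1, H2⟩
    exact hch ⟨a + 2 ^ n * (t - e), a + 2 ^ n * t, a + 2 ^ n * (t + e), H1, H2, by push_cast; ring⟩
  have e2 : a + 2 ^ n * x' = b := by rw [← hxx]; ring
  have e3 : a + 2 ^ n * (x' + y') = c := by rw [mul_add, ← hxx, ← hyy]; ring
  refine phase_core g hginj hAP 0 x' (x' + y') (by simpa using hox) (by simpa using hoy) ?_ ?_
  · show f (a + 2 ^ n * 0) < f (a + 2 ^ n * x')
    rw [show a + 2 ^ n * 0 = a by ring, e2]
    exact h1
  · show f (a + 2 ^ n * x') < f (a + 2 ^ n * (x' + y'))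
    rw [e2, e3]
    exact h2
end

section
/- Let (X, ⪯) be a totally ordered set. Every chaotic map f : ℚ → X is binary. -/
section Aux

variable {X : Type*} [LinearOrder X]

/-- From `g i < g 0` deduce `g (-i) < g 0`, using chaos on the AP `(i, 0, -i)`. -/
private lemma chaos_flip (g : ℤ → X) (hginj : Function.Injective g)
    (hg : ∀ x y z : ℤ, g x < g y → g y < g z → y - x ≠ z - y)
    (i : ℤ) (h : g i < g 0) : g (-i) < g 0 := by
  rcases lt_trichotomy (g (-i)) (g 0) with h'|h'|h'
  · exact h'
  · have : -i = 0 := hginj h'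
    have : i = 0 := by omega
    rw [this] at h; exact absurd h (lt_irrefl _)
  · exact absurd (show (0 : ℤ) - i = -i - 0 by ring) (hg i 0 (-i) h h')

/-- From `g 0 < g i` deduce `g 0 < g (-i)`, using chaos on the AP `(-i, 0, i)`. -/
private lemma chaos_flip' (g : ℤ → X) (hginj : Function.Injective g)
    (hg : ∀ x y z : ℤ, g x < g y → g y < g z → y - x ≠ z - y)
    (i : ℤ) (h : g 0 < g i) : g 0 < g (-i) := by
  rcases lt_trichotomy (g 0) (g (-i)) with h'|h'|h'
  · exact h'
  · have : -i = 0 := hginj h'.symm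
    have : i = 0 := by omega
    rw [this] at h; exact absurd h (lt_irrefl _)
  · exact absurd (show (0 : ℤ) - -i = i - 0 by ring) (hg (-i) 0 i h' h)

/-- Finite descent: if all odd points of absolute value `< k` are above `g 0`
but `g (±k)` are below `g 0` (with `k` odd), we get a contradiction. -/
private lemma descent (g : ℤ → X) (hginj : Function.Injective g)
    (hg : ∀ x y z : ℤ, g x < g y → g y < g z → y - x ≠ z - y)
    (k : ℤ) (hk : 1 < k) (hkodd : Odd k)
    (hi : ∀ i : ℤ, Odd i → |i| < k → g 0 < g i)
    (hka : g k < g 0) (hkb : g (-k) < g 0) : False := by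
  classical
  set s : ℤ → ℤ := fun t => if t < 0 then 2 * t + k else 2 * t - k with hs
  obtain ⟨m, hm⟩ := hkodd
  have hstep : ∀ t : ℤ, Odd t → |t| < k → Odd (s t) ∧ |s t| < k ∧ g (s t) < g t := by
    intro t ht hlt
    have habs : -k < t ∧ t < k := abs_lt.mp hlt
    have ht0 : t ≠ 0 := by rintro rfl; exact (Int.not_odd_iff_even.mpr Even.zero) ht
    obtain ⟨m', hm'⟩ := ht
    have h0t : g 0 < g t := hi t ⟨m', hm'⟩ hlt
    by_cases htneg : t < 0
    · have hst : s t = 2 * t + k := by simp [hs, htneg]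
      have hodd : Odd (s t) := ⟨t + m, by rw [hst]; omega⟩
      have hb : |s t| < k := by rw [hst, abs_lt]; omega
      refine ⟨hodd, hb, ?_⟩
      have hne : s t ≠ t := by rw [hst]; omega
      rcases lt_trichotomy (g (s t)) (g t) with h|h|h
      · exact h
      · exact absurd (hginj h) hne
      · exact absurd (show t - -k = s t - t by rw [hst]; ring)
          (hg (-k) t (s t) (hkb.trans h0t) h)
    · have hst : s t = 2 * t - k := by simp [hs, htneg]
      have hodd : Odd (s t) := ⟨t - m - 1, by rw [hst]; omega⟩
      have hb : |s t| < k := by rw [hst, abs_lt]; omega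
      refine ⟨hodd, hb, ?_⟩
      have hne : s t ≠ t := by rw [hst]; omega
      rcases lt_trichotomy (g (s t)) (g t) with h|h|h
      · exact h
      · exact absurd (hginj h) hne
      · exact absurd (show t - k = s t - t by rw [hst]; ring)
          (hg k t (s t) (hka.trans h0t) h)
  have P : ∀ n : ℕ, Odd (s^[n] 1) ∧ |s^[n] 1| < k := by
    intro n
    induction n with
    | zero => exact ⟨odd_one, by simpa using hk⟩
    | succ n ih =>
      rw [Function.iterate_succ_apply']
      exact ⟨(hstep _ ih.1 ih.2).1, (hstep _ ih.1 ih.2).2.1⟩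
  have hdec : ∀ n : ℕ, g (s^[n + 1] 1) < g (s^[n] 1) := by
    intro n
    rw [Function.iterate_succ_apply']
    exact (hstep _ (P n).1 (P n).2).2.2
  have hanti : StrictAnti (fun n : ℕ => g (s^[n] 1)) := strictAnti_nat_of_succ_lt hdec
  have hFinj : Function.Injective (fun n : ℕ => s^[n] 1) := fun a b h =>
    hanti.injective (congrArg g h)
  have hsub : Set.range (fun n : ℕ => s^[n] 1) ⊆ Set.Ioo (-k) k := by
    rintro _ ⟨n, rfl⟩
    exact Set.mem_Ioo.mpr (abs_lt.mp (P n).2)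
  exact ((Set.finite_Ioo (-k) k).subset hsub).not_infinite
    (Set.infinite_range_of_injective hFinj)

/-- Dual version of `descent`. -/
private lemma descent' (g : ℤ → X) (hginj : Function.Injective g)
    (hg : ∀ x y z : ℤ, g x < g y → g y < g z → y - x ≠ z - y)
    (k : ℤ) (hk : 1 < k) (hkodd : Odd k)
    (hi : ∀ i : ℤ, Odd i → |i| < k → g i < g 0)
    (hka : g 0 < g k) (hkb : g 0 < g (-k)) : False := by
  refine descent (X := Xᵒᵈ) (fun t => OrderDual.toDual (g t))
      (fun a b h => hginj (by simpa using h))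
      (fun x y z h1 h2 heq => ?_) k hk hkodd
      (fun i hio hiabs => by simpa using hi i hio hiabs)
      (by simpa using hka) (by simpa using hkb)
  have h1' : g y < g x := by simpa using h1
  have h2' : g z < g y := by simpa using h2
  exact hg z y x h2' h1' (by omega)

/-- Master lemma: the side of `g K` relative to `g 0` is the same for all odd `K > 0`. -/
private lemma master (g : ℤ → X) (hginj : Function.Injective g)
    (hg : ∀ x y z : ℤ, g x < g y → g y < g z → y - x ≠ z - y) :
    ∀ K : ℕ, Odd K → (g (K : ℤ) < g 0 ↔ g 1 < g 0) := by
  intro K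
  induction K using Nat.strong_induction_on with
  | _ K IH =>
    intro hKodd
    rcases eq_or_ne K 1 with h1|h1
    · subst h1; norm_num
    · obtain ⟨mK, hmK⟩ := hKodd
      have hK3 : 3 ≤ K := by omega
      have hKgt : (1 : ℤ) < (K : ℤ) := by exact_mod_cast (by omega : 1 < K)
      have hKoddZ : Odd (K : ℤ) := ⟨mK, by exact_mod_cast hmK⟩
      have hsides : ∀ i : ℤ, Odd i → |i| < (K : ℤ) → (g i < g 0 ↔ g 1 < g 0) := by
        intro i hiodd hilt
        have hmlt : i.natAbs < K := by
          rw [Int.abs_eq_natAbs] at hilt; exact_mod_cast hilt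
        have hiff := IH i.natAbs hmlt (Int.natAbs_odd.mpr hiodd)
        rcases Int.natAbs_eq i with h|h
        · rw [← h] at hiff; exact hiff
        · constructor
          · intro hlt
            have := chaos_flip g hginj hg i hlt
            rw [← neg_eq_iff_eq_neg.mpr h] at hiff
            exact hiff.mp this
          · intro hlt
            have := hiff.mpr hlt
            rw [← neg_eq_iff_eq_neg.mpr h] at this
            have := chaos_flip g hginj hg _ this
            rwa [neg_neg] at this
      have hKne : ((K : ℤ)) ≠ 0 := by omega
      rcases lt_trichotomy (g 1) (g 0) with hb|hb|hb
      · constructor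
        · intro _; exact hb
        · intro _
          by_contra hc
          have hne : g (K : ℤ) ≠ g 0 := fun h => hKne (hginj h)
          have hgtK : g 0 < g (K : ℤ) := lt_of_le_of_ne (not_lt.mp hc) (Ne.symm hne)
          have hgtK' : g 0 < g (-(K : ℤ)) := chaos_flip' g hginj hg _ hgtK
          exact descent' g hginj hg (K : ℤ) hKgt hKoddZ
            (fun i hio hiabs => (hsides i hio hiabs).mpr hb) hgtK hgtK'
      · exact absurd (hginj hb) one_ne_zero
      · constructor
        · intro hK
          have hK' : g (-(K : ℤ)) < g 0 := chaos_flip g hginj hg _ hK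
          exact absurd (descent g hginj hg (K : ℤ) hKgt hKoddZ
            (fun i hio hiabs => by
              have hne : g i ≠ g 0 := fun h =>
                (by rintro rfl; exact (Int.not_odd_iff_even.mpr Even.zero) hio : i ≠ 0) (hginj h)
              rcases lt_or_ge (g i) (g 0) with h|h
              · exact absurd hb (not_lt.mpr ((hsides i hio hiabs).mp h).le)
              · exact lt_of_le_of_ne h (Ne.symm hne)) hK hK') id
        · intro h1'
          exact absurd h1' (not_lt.mpr hb.le)

end Aux

/-- Let (X, ⪯) be a totally ordered set. Every chaotic map f : ℚ → X is
binary. -/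
theorem stmt_8 {X : Type*} [LinearOrder X] (f : ℚ → X)
    (hinj : Function.Injective f)
    (hch : ¬ ∃ a b c : ℚ, f a < f b ∧ f b < f c ∧ b - a = c - b) :
    Function.Injective f ∧
      ¬ ∃ a b c : ℚ, f a < f b ∧ f b < f c ∧ ord2 (b - a) = ord2 (c - b) := by
  refine ⟨hinj, ?_⟩
  rintro ⟨a, b, c, hab, hbc, hord⟩
  -- the differences are nonzero
  have hu : b - a ≠ 0 := by
    intro h
    have : b = a := by linarith [sub_eq_zero.mp h]
    rw [this] at hab; exact absurd hab (lt_irrefl _)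
  have hv : c - b ≠ 0 := by
    intro h
    have : c = b := by linarith [sub_eq_zero.mp h]
    rw [this] at hbc; exact absurd hbc (lt_irrefl _)
  set u : ℚ := b - a with hudef
  set v : ℚ := c - b with hvdef
  rw [ord2, ord2, if_neg hu, if_neg hv] at hord
  have hval : padicValRat 2 u = padicValRat 2 v := WithTop.coe_eq_coe.mp hord
  -- the ratio r = u / v has 2-adic valuation 0, hence odd numerator and denominator
  set r : ℚ := u / v with hrdef
  have hr : r ≠ 0 := div_ne_zero hu hv
  have hval0 : padicValRat 2 r = 0 := by
    rw [hrdef, padicValRat.div hu hv, hval]; ring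
  have hvals : (padicValInt 2 r.num : ℤ) = (padicValNat 2 r.den : ℤ) := by
    rw [padicValRat_def] at hval0; omega
  have hnum0 : r.num ≠ 0 := Rat.num_ne_zero.mpr hr
  have hden0 : r.den ≠ 0 := r.den_nz
  have hnumodd : ¬ (2 : ℤ) ∣ r.num := by
    intro hdvd
    have hdvdn : 2 ∣ r.num.natAbs := by
      have := Int.natAbs_dvd_natAbs.mpr hdvd
      simpa using this
    have hdenodd : ¬ (2 : ℕ) ∣ r.den := by
      intro hd
      have h2 : (2 : ℕ) ∣ Nat.gcd r.num.natAbs r.den := Nat.dvd_gcd hdvdn hd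
      rw [r.reduced] at h2
      norm_num at h2
    have hz : padicValNat 2 r.den = 0 := padicValNat.eq_zero_of_not_dvd hdenodd
    have hz' : padicValInt 2 r.num = 0 := by omega
    rw [padicValInt, padicValNat.eq_zero_iff] at hz'
    rcases hz' with h|h|h
    · norm_num at h
    · exact absurd h (Int.natAbs_ne_zero.mpr hnum0)
    · exact h hdvdn
  have hjodd : Odd r.num := Int.not_even_iff_odd.mp (fun h => hnumodd (even_iff_two_dvd.mp h))
  have hdenodd : Odd r.den := by
    have hz : padicValInt 2 r.num = 0 := padicValInt.eq_zero_of_not_dvd hnumodd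
    have hz' : padicValNat 2 r.den = 0 := by omega
    rw [padicValNat.eq_zero_iff] at hz'
    rcases hz' with h|h|h
    · norm_num at h
    · exact absurd h hden0
    · exact Nat.not_even_iff_odd.mp (fun he => h (even_iff_two_dvd.mp he))
  set j : ℤ := r.num with hjdef
  set k : ℤ := (r.den : ℤ) with hkdef
  have hkpos : 0 < k := by rw [hkdef]; exact_mod_cast Nat.pos_of_ne_zero hden0
  have hkQ : (k : ℚ) ≠ 0 := by
    simp only [ne_eq, Int.cast_eq_zero]; omega
  set e : ℚ := v / (k : ℚ) with hedef
  have he : e ≠ 0 := div_ne_zero hv hkQ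
  have hreq : (j : ℚ) / (k : ℚ) = r := by
    rw [hjdef, hkdef]; push_cast; exact r.num_div_den
  have hu_eq : (j : ℚ) * e = u := by
    have h1 : (j : ℚ) * e = ((j : ℚ) / (k : ℚ)) * v := by rw [hedef]; ring
    rw [h1, hreq, hrdef, div_mul_cancel₀ u hv]
  have hv_eq : (k : ℚ) * e = v := by
    rw [hedef, mul_div_cancel₀ v hkQ]
  -- pass to the lattice b + ℤ e
  set g : ℤ → X := fun t => f (b + (t : ℚ) * e) with hgdef
  have hginj : Function.Injective g := by
    intro t1 t2 h
    have h' : b + (t1 : ℚ) * e = b + (t2 : ℚ) * e := hinj h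
    have h'' : (t1 : ℚ) = t2 := mul_right_cancel₀ he (by linarith)
    exact_mod_cast h''
  have hg : ∀ x y z : ℤ, g x < g y → g y < g z → y - x ≠ z - y := by
    intro x y z h1 h2 heq
    apply hch
    refine ⟨b + (x : ℚ) * e, b + (y : ℚ) * e, b + (z : ℚ) * e, h1, h2, ?_⟩
    have hq : (y : ℚ) - x = (z : ℚ) - y := by exact_mod_cast heq
    linear_combination e * hq
  have hg0 : g 0 = f b := by
    show f (b + ((0 : ℤ) : ℚ) * e) = f b
    norm_num
  have hgj : g (-j) = f a := by
    show f (b + ((-j : ℤ) : ℚ) * e) = f a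
    exact congrArg f (by push_cast; linear_combination -hu_eq)
  have hgk : g k = f c := by
    show f (b + ((k : ℤ) : ℚ) * e) = f c
    exact congrArg f (by linear_combination hv_eq)
  have h1 : g (-j) < g 0 := by rw [hgj, hg0]; exact hab
  have h2 : g 0 < g k := by rw [hg0, hgk]; exact hbc
  -- normalize to positive odd radii
  set J : ℕ := j.natAbs with hJdef
  have hJodd : Odd J := Int.natAbs_odd.mpr hjodd
  have hgJ : g (J : ℤ) < g 0 := by
    rcases Int.natAbs_eq j with h|h
    · have := chaos_flip g hginj hg (-j) h1
      rw [neg_neg] at this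
      rwa [← h]
    · rw [show ((J : ℤ)) = -j by omega]
      exact h1
  set K : ℕ := k.natAbs with hKdef
  have hKodd : Odd K := by
    rw [hKdef, hkdef]
    simpa using hdenodd
  have hgK : g 0 < g (K : ℤ) := by
    rw [show ((K : ℤ)) = k by omega]
    exact h2
  have hm1 := (master g hginj hg J hJodd).mp hgJ
  have hm2 := (master g hginj hg K hKodd).mpr hm1
  exact absurd hgK (not_lt.mpr hm2.le)
end

section
/- Let (X, ⪯) be a totally ordered set. If f : ℚ → X is a chaotic bijection, then either X does not have a maximum or X does not have a minimum. -/
/-- Let (X, ⪯) be a totally ordered set. If f : ℚ → X is a chaotic bijection,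
then either X does not have a maximum or X does not have a minimum. -/
theorem stmt_9 {X : Type*} [LinearOrder X] (f : ℚ → X)
    (hbij : Function.Bijective f)
    (hch : ¬ ∃ a b c : ℚ, f a < f b ∧ f b < f c ∧ b - a = c - b) :
    (¬ ∃ m : X, ∀ x : X, x ≤ m) ∨ (¬ ∃ m : X, ∀ x : X, m ≤ x) := by
  by_contra h
  push_neg at h
  obtain ⟨⟨M, hM⟩, ⟨m, hm⟩⟩ := h
  obtain ⟨a, ha⟩ := hbij.2 m
  obtain ⟨c, hc⟩ := hbij.2 M
  by_cases hac : a = c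
  · -- then m = M, all elements equal, contradicting injectivity
    have : f 0 = f 1 := le_antisymm (by
      calc f 0 ≤ M := hM _
      _ = f c := hc.symm
      _ = f a := by rw [hac]
      _ = m := ha
      _ ≤ f 1 := hm _) (by
      calc f 1 ≤ M := hM _
      _ = f c := hc.symm
      _ = f a := by rw [hac]
      _ = m := ha
      _ ≤ f 0 := hm _)
    have := hbij.1 this
    norm_num at this
  · set b := (a + c) / 2 with hb
    have hba : b ≠ a := by
      simp only [hb]; intro h; apply hac; linarith [h]
    have hbc : b ≠ c := by
      simp only [hb]; intro h; apply hac; linarith [h]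
    apply hch
    refine ⟨a, b, c, ?_, ?_, by ring⟩
    · exact lt_of_le_of_ne (ha ▸ hm _) (fun h => hba (hbij.1 h.symm))
    · exact lt_of_le_of_ne (hc ▸ hM _) (fun h => hbc (hbij.1 h))
end

section
/- Let (X, ⪯) be a countably infinite totally ordered set without isolated points. Then there exists a binary bijection f : ℕ → X. -/
/-- `s` is strictly between `p` and `q`. -/
def myBtw {X : Type*} [LT X] (p s q : X) : Prop := (p < s ∧ s < q) ∨ (q < s ∧ s < p)

/-- nothing of `S` is strictly between `p` and `y`. -/
def myAdj {X : Type*} [LT X] (S : Finset X) (p y : X) : Prop := ∀ s ∈ S, ¬ myBtw p s y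

/-- the "parent" of `n` : `n` with its top binary bit removed. -/
def par (n : ℕ) : ℕ := n - 2 ^ Nat.log 2 n

lemma par_lt {n : ℕ} (hn : 0 < n) : par n < n := by
  have h1 : 1 ≤ 2 ^ Nat.log 2 n := Nat.one_le_two_pow
  have h2 : 2 ^ Nat.log 2 n ≤ n := Nat.pow_log_le_self 2 hn.ne'
  unfold par; omega

lemma par_add_pow {n : ℕ} (hn : 0 < n) : par n + 2 ^ Nat.log 2 n = n := by
  have h2 : 2 ^ Nat.log 2 n ≤ n := Nat.pow_log_le_self 2 hn.ne'
  unfold par; omega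

lemma par_mod {n k : ℕ} (hn : 0 < n) (hk : k + 1 ≤ Nat.log 2 n) :
    par n % 2 ^ (k+1) = n % 2 ^ (k+1) := by
  conv_rhs => rw [← par_add_pow hn]
  have : 2 ^ Nat.log 2 n = 2 ^ (k+1) * 2 ^ (Nat.log 2 n - (k+1)) := by
    rw [← pow_add]; congr 1; omega
  rw [this, Nat.add_mul_mod_self_left]

lemma par_eq {m t : ℕ} (h : m < 2 ^ t) : par (m + 2 ^ t) = m := by
  have hl : Nat.log 2 (m + 2 ^ t) = t := by
    apply Nat.log_eq_of_pow_le_of_lt_pow (by omega)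
    have : 2 ^ (t+1) = 2 ^ t + 2 ^ t := by ring
    omega
  unfold par; rw [hl]; omega

lemma side {X : Type*} [LinearOrder X] {p q r : X} (h : ¬ myBtw p r q)
    (hrp : r ≠ p) (hrq : r ≠ q) : (r < p ↔ r < q) := by
  unfold myBtw at h
  constructor
  · intro h1
    by_contra h2
    exact h (Or.inr ⟨(not_lt.mp h2).lt_of_ne hrq.symm, h1⟩)
  · intro h1
    by_contra h2
    exact h (Or.inl ⟨(not_lt.mp h2).lt_of_ne hrp.symm, h1⟩)

/-- ROOM: next to any point of a finite set there is a free spot. -/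
lemma room {X : Type*} [LinearOrder X] [TopologicalSpace X] [OrderTopology X] [Infinite X]
    (hiso : ∀ x : X, ¬ IsOpen ({x} : Set X)) (S : Finset X) {p : X} (hp : p ∈ S) :
    ∃ y, y ∉ S ∧ myAdj S p y := by
  by_contra hcon
  push_neg at hcon
  have h : ∀ y, y ∉ S → ∃ s ∈ S, myBtw p s y := by
    intro y hy
    have := hcon y hy
    unfold myAdj at this
    push_neg at this
    exact this
  classical
  set A := S.filter (fun s => p < s) with hA
  set B := S.filter (fun s => s < p) with hB
  rcases eq_or_ne A ∅ with hAe | hAn <;> rcases eq_or_ne B ∅ with hBe | hBn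
  · -- S ⊆ {p}
    obtain ⟨y, hy⟩ := exists_ne p
    have hyS : y ∉ S := by
      intro hyS
      rcases lt_trichotomy y p with h1 | h1 | h1
      · have : y ∈ B := Finset.mem_filter.mpr ⟨hyS, h1⟩
        simp [hBe] at this
      · exact hy h1
      · have : y ∈ A := Finset.mem_filter.mpr ⟨hyS, h1⟩
        simp [hAe] at this
    obtain ⟨s, hsS, hs⟩ := h y hyS
    rcases lt_trichotomy s p with h1 | h1 | h1
    · have : s ∈ B := Finset.mem_filter.mpr ⟨hsS, h1⟩
      simp [hBe] at this
    · subst h1; unfold myBtw at hs; rcases hs with ⟨h2, _⟩ | ⟨_, h2⟩ <;> exact absurd h2 (lt_irrefl _)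
    · have : s ∈ A := Finset.mem_filter.mpr ⟨hsS, h1⟩
      simp [hAe] at this
  · -- only below
    have hBne : B.Nonempty := Finset.nonempty_of_ne_empty hBn
    set v := B.max' hBne with hv
    have hvB : v ∈ B := B.max'_mem hBne
    have hvp : v < p := (Finset.mem_filter.mp hvB).2
    apply hiso p
    have : Set.Ioi v = {p} := by
      ext z
      simp only [Set.mem_Ioi, Set.mem_singleton_iff]
      constructor
      · intro hz
        by_contra hzp
        have hzS : z ∉ S := by
          intro hzS
          rcases lt_trichotomy z p with h1 | h1 | h1
          · have : z ∈ B := Finset.mem_filter.mpr ⟨hzS, h1⟩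
            exact absurd (B.le_max' z this) (by simp [← hv]; exact hz)
          · exact hzp h1
          · have : z ∈ A := Finset.mem_filter.mpr ⟨hzS, h1⟩
            simp [hAe] at this
        obtain ⟨s, hsS, hs⟩ := h z hzS
        unfold myBtw at hs
        rcases hs with ⟨h1, h2⟩ | ⟨h1, h2⟩
        · have : s ∈ A := Finset.mem_filter.mpr ⟨hsS, h1⟩
          simp [hAe] at this
        · have hsB : s ∈ B := Finset.mem_filter.mpr ⟨hsS, h2⟩
          have := B.le_max' s hsB
          rw [← hv] at this
          exact absurd (lt_of_le_of_lt this hz) (not_lt.mpr h1.le)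
      · intro hz; subst hz; exact hvp
    rw [← this]; exact isOpen_Ioi
  · -- only above
    have hAne : A.Nonempty := Finset.nonempty_of_ne_empty hAn
    set v := A.min' hAne with hv
    have hvA : v ∈ A := A.min'_mem hAne
    have hvp : p < v := (Finset.mem_filter.mp hvA).2
    apply hiso p
    have : Set.Iio v = {p} := by
      ext z
      simp only [Set.mem_Iio, Set.mem_singleton_iff]
      constructor
      · intro hz
        by_contra hzp
        have hzS : z ∉ S := by
          intro hzS
          rcases lt_trichotomy z p with h1 | h1 | h1
          · have : z ∈ B := Finset.mem_filter.mpr ⟨hzS, h1⟩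
            simp [hBe] at this
          · exact hzp h1
          · have : z ∈ A := Finset.mem_filter.mpr ⟨hzS, h1⟩
            exact absurd (A.min'_le z this) (by simp [← hv]; exact hz)
        obtain ⟨s, hsS, hs⟩ := h z hzS
        unfold myBtw at hs
        rcases hs with ⟨h1, h2⟩ | ⟨h1, h2⟩
        · have hsA : s ∈ A := Finset.mem_filter.mpr ⟨hsS, h1⟩
          have := A.min'_le s hsA
          rw [← hv] at this
          exact absurd (lt_of_lt_of_le hz this) (not_lt.mpr h2.le)
        · have : s ∈ B := Finset.mem_filter.mpr ⟨hsS, h2⟩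
          simp [hBe] at this
      · intro hz; subst hz; exact hvp
    rw [← this]; exact isOpen_Iio
  · -- both sides
    have hAne : A.Nonempty := Finset.nonempty_of_ne_empty hAn
    have hBne : B.Nonempty := Finset.nonempty_of_ne_empty hBn
    set va := A.min' hAne with hva
    set vb := B.max' hBne with hvb
    have hvap : p < va := (Finset.mem_filter.mp (A.min'_mem hAne)).2
    have hvbp : vb < p := (Finset.mem_filter.mp (B.max'_mem hBne)).2
    apply hiso p
    have : Set.Ioo vb va = {p} := by
      ext z
      simp only [Set.mem_Ioo, Set.mem_singleton_iff]
      constructor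
      · rintro ⟨hz1, hz2⟩
        by_contra hzp
        have hzS : z ∉ S := by
          intro hzS
          rcases lt_trichotomy z p with h1 | h1 | h1
          · have : z ∈ B := Finset.mem_filter.mpr ⟨hzS, h1⟩
            exact absurd (B.le_max' z this) (by simp [← hvb]; exact hz1)
          · exact hzp h1
          · have : z ∈ A := Finset.mem_filter.mpr ⟨hzS, h1⟩
            exact absurd (A.min'_le z this) (by simp [← hva]; exact hz2)
        obtain ⟨s, hsS, hs⟩ := h z hzS
        unfold myBtw at hs
        rcases hs with ⟨h1, h2⟩ | ⟨h1, h2⟩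
        · have hsA : s ∈ A := Finset.mem_filter.mpr ⟨hsS, h1⟩
          have := A.min'_le s hsA
          rw [← hva] at this
          exact absurd (lt_of_lt_of_le hz2 this) (not_lt.mpr h2.le)
        · have hsB : s ∈ B := Finset.mem_filter.mpr ⟨hsS, h2⟩
          have := B.le_max' s hsB
          rw [← hvb] at this
          exact absurd (lt_of_le_of_lt this hz1) (not_lt.mpr h1.le)
      · intro hz; subst hz; exact ⟨hvbp, hvap⟩
    rw [← this]; exact isOpen_Ioo
/-- Consistency: comparisons under `f` only depend on residues mod `2^(k+1)`,
given the adjacency property. -/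
lemma consistency {X : Type*} [LinearOrder X] (f : ℕ → X) (hinj : Function.Injective f)
    (hADJ : ∀ n, 0 < n → ∀ j < n, ¬ myBtw (f (par n)) (f j) (f n)) (k : ℕ) :
    ∀ x y : ℕ, x % 2 ^ k = y % 2 ^ k → x % 2 ^ (k+1) ≠ y % 2 ^ (k+1) →
      (f x < f y ↔ f (x % 2 ^ (k+1)) < f (y % 2 ^ (k+1))) := by
  have key : ∀ m : ℕ, ∀ x y : ℕ, x + y = m → x % 2 ^ k = y % 2 ^ k →
      x % 2 ^ (k+1) ≠ y % 2 ^ (k+1) →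
      (f x < f y ↔ f (x % 2 ^ (k+1)) < f (y % 2 ^ (k+1))) := by
    intro m
    induction m using Nat.strong_induction_on with
    | _ m ih =>
      intro x y hm hk hk1
      have hxy : x ≠ y := fun h => hk1 (by rw [h])
      rcases lt_trichotomy x y with hlt | heq | hlt
      · -- x < y
        rcases lt_or_ge y (2 ^ (k+1)) with hy | hy
        · -- base case
          rw [Nat.mod_eq_of_lt hy, Nat.mod_eq_of_lt (lt_trans hlt hy)]
        · -- reduce y
          have hy0 : 0 < y := lt_of_lt_of_le (Nat.pow_pos (by omega)) hy
          set t := Nat.log 2 y with ht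
          have hkt : k + 1 ≤ t := (Nat.le_log_iff_pow_le (by omega) hy0.ne').mpr hy
          set p := par y with hpd
          have hpm : p % 2 ^ (k+1) = y % 2 ^ (k+1) := par_mod hy0 hkt
          have hpmk : p % 2 ^ k = y % 2 ^ k := by
            rw [← Nat.mod_mod_of_dvd p (pow_dvd_pow 2 (Nat.le_succ k)), hpm,
              Nat.mod_mod_of_dvd y (pow_dvd_pow 2 (Nat.le_succ k))]
          have hxp : x ≠ p := fun h => hk1 (by rw [h, hpm])
          have hadj := hADJ y hy0 x hlt
          have hside : f x < f (par y) ↔ f x < f y :=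
            side hadj (hinj.ne hxp) (hinj.ne hxy)
          have hplt : p < y := par_lt hy0
          have := ih (x + p) (by omega) x p rfl (by rw [hk, hpmk]) (by rw [hpm]; exact hk1)
          rw [hpm] at this
          exact hside.symm.trans this
      · exact absurd heq hxy
      · -- y < x : reduce x
        rcases lt_or_ge x (2 ^ (k+1)) with hx | hx
        · rw [Nat.mod_eq_of_lt hx, Nat.mod_eq_of_lt (lt_trans hlt hx)]
        · have hx0 : 0 < x := lt_of_lt_of_le (Nat.pow_pos (by omega)) hx
          set t := Nat.log 2 x with ht
          have hkt : k + 1 ≤ t := (Nat.le_log_iff_pow_le (by omega) hx0.ne').mpr hx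
          set p := par x with hpd
          have hpm : p % 2 ^ (k+1) = x % 2 ^ (k+1) := par_mod hx0 hkt
          have hpmk : p % 2 ^ k = x % 2 ^ k := by
            rw [← Nat.mod_mod_of_dvd p (pow_dvd_pow 2 (Nat.le_succ k)), hpm,
              Nat.mod_mod_of_dvd x (pow_dvd_pow 2 (Nat.le_succ k))]
          have hyp : y ≠ p := fun h => hk1 (by rw [h, hpm])
          have hadj := hADJ x hx0 y hlt
          have hside : f y < f (par x) ↔ f y < f x :=
            side hadj (hinj.ne hyp) (hinj.ne hxy.symm)
          have hplt : p < x := par_lt hx0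
          have flip : ∀ u v : X, u ≠ v → (u < v ↔ ¬ v < u) :=
            fun u v h => ⟨fun h1 h2 => lt_asymm h1 h2,
              fun h2 => (h.lt_or_gt).resolve_right h2⟩
          have hflip : f x < f y ↔ f p < f y := by
            calc f x < f y ↔ ¬ f y < f x := flip _ _ (hinj.ne hxy.symm).symm
              _ ↔ ¬ f y < f p := not_congr hside.symm
              _ ↔ f p < f y := (flip _ _ (hinj.ne hyp.symm)).symm
          have := ih (p + y) (by omega) p y rfl (by rw [hpmk, hk]) (by rw [hpm]; exact hk1)
          rw [hpm] at this
          rw [hflip]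
          exact this
  intro x y h1 h2
  exact key (x + y) x y rfl h1 h2

lemma mod_two_cases {a b c P : ℕ} (hP : 0 < P)
    (hab : a % P = b % P) (hbc : b % P = c % P)
    (ha : a < 2 * P) (hb : b < 2 * P) (hc : c < 2 * P)
    (hab' : a ≠ b) (hbc' : b ≠ c) : a = c := by
  have ha2 := Nat.div_add_mod a P
  have hb2 := Nat.div_add_mod b P
  have hc2 := Nat.div_add_mod c P
  have haq : a / P < 2 := Nat.div_lt_of_lt_mul (by omega)
  have hbq : b / P < 2 := Nat.div_lt_of_lt_mul (by omega)
  have hcq : c / P < 2 := Nat.div_lt_of_lt_mul (by omega)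
  have har : a % P < P := Nat.mod_lt _ hP
  interval_cases h1 : a / P <;> interval_cases h2 : b / P <;> interval_cases h3 : c / P <;> omega

/-- The binary property from the adjacency property. -/
lemma binary_of_adj {X : Type*} [LinearOrder X] (f : ℕ → X) (hinj : Function.Injective f)
    (hADJ : ∀ n, 0 < n → ∀ j < n, ¬ myBtw (f (par n)) (f j) (f n)) :
    ¬ ∃ a b c : ℕ, f a < f b ∧ f b < f c ∧
      ord2 ((b : ℚ) - (a : ℚ)) = ord2 ((c : ℚ) - (b : ℚ)) := by
  rintro ⟨a, b, c, h1, h2, h3⟩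
  have hab : a ≠ b := fun h => absurd (congrArg f h) h1.ne
  have hbc : b ≠ c := fun h => absurd (congrArg f h) h2.ne
  have habz : ((b : ℚ) - (a : ℚ)) ≠ 0 := by
    intro h
    exact hab (by exact_mod_cast (sub_eq_zero.mp h).symm)
  have hbcz : ((c : ℚ) - (b : ℚ)) ≠ 0 := by
    intro h
    exact hbc (by exact_mod_cast (sub_eq_zero.mp h).symm)
  rw [ord2, ord2, if_neg habz, if_neg hbcz] at h3
  have h3' : padicValRat 2 ((b : ℚ) - (a : ℚ)) = padicValRat 2 ((c : ℚ) - (b : ℚ)) := by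
    exact_mod_cast h3
  have e1 : ((b : ℚ) - (a : ℚ)) = (((b : ℤ) - (a : ℤ) : ℤ) : ℚ) := by push_cast; ring
  have e2 : ((c : ℚ) - (b : ℚ)) = (((c : ℤ) - (b : ℤ) : ℤ) : ℚ) := by push_cast; ring
  rw [e1, e2, padicValRat.of_int, padicValRat.of_int] at h3'
  have h3'' : padicValInt 2 ((b : ℤ) - (a : ℤ)) = padicValInt 2 ((c : ℤ) - (b : ℤ)) := by
    exact_mod_cast h3'
  unfold padicValInt at h3''
  set k := padicValNat 2 ((b : ℤ) - (a : ℤ)).natAbs with hk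
  -- divisibility facts
  have hd1 : ((b : ℤ) - (a : ℤ)).natAbs ≠ 0 := by
    simp only [ne_eq, Int.natAbs_eq_zero, sub_eq_zero]
    exact_mod_cast fun h => hab (by exact_mod_cast h.symm)
  have hd2 : ((c : ℤ) - (b : ℤ)).natAbs ≠ 0 := by
    simp only [ne_eq, Int.natAbs_eq_zero, sub_eq_zero]
    exact_mod_cast fun h => hbc (by exact_mod_cast h.symm)
  have dvd1 : 2 ^ k ∣ ((b : ℤ) - (a : ℤ)).natAbs := pow_padicValNat_dvd
  have dvd2 : 2 ^ k ∣ ((c : ℤ) - (b : ℤ)).natAbs := h3'' ▸ pow_padicValNat_dvd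
  have ndvd1 : ¬ 2 ^ (k+1) ∣ ((b : ℤ) - (a : ℤ)).natAbs := pow_succ_padicValNat_not_dvd hd1
  have ndvd2 : ¬ 2 ^ (k+1) ∣ ((c : ℤ) - (b : ℤ)).natAbs := by
    rw [h3'']
    exact pow_succ_padicValNat_not_dvd hd2
  -- transfer to nat mod facts
  have habk : a % 2 ^ k = b % 2 ^ k := by
    have : ((2 ^ k : ℕ) : ℤ) ∣ ((b : ℤ) - (a : ℤ)) := Int.natCast_dvd.mpr dvd1
    exact Nat.modEq_iff_dvd.mpr this
  have hbck : b % 2 ^ k = c % 2 ^ k := by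
    have : ((2 ^ k : ℕ) : ℤ) ∣ ((c : ℤ) - (b : ℤ)) := Int.natCast_dvd.mpr dvd2
    exact Nat.modEq_iff_dvd.mpr this
  have habk1 : a % 2 ^ (k+1) ≠ b % 2 ^ (k+1) := by
    intro h
    exact ndvd1 (Int.natCast_dvd.mp (Nat.modEq_iff_dvd.mp h))
  have hbck1 : b % 2 ^ (k+1) ≠ c % 2 ^ (k+1) := by
    intro h
    exact ndvd2 (Int.natCast_dvd.mp (Nat.modEq_iff_dvd.mp h))
  -- A = C
  have hP : (0:ℕ) < 2 ^ k := Nat.pow_pos (by omega)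
  have hpow : 2 ^ (k+1) = 2 * 2 ^ k := by ring
  have hAC : a % 2 ^ (k+1) = c % 2 ^ (k+1) := by
    apply mod_two_cases (b := b % 2 ^ (k+1)) hP
    · rw [Nat.mod_mod_of_dvd a (pow_dvd_pow 2 (Nat.le_succ k)),
        Nat.mod_mod_of_dvd b (pow_dvd_pow 2 (Nat.le_succ k)), habk]
    · rw [Nat.mod_mod_of_dvd b (pow_dvd_pow 2 (Nat.le_succ k)),
        Nat.mod_mod_of_dvd c (pow_dvd_pow 2 (Nat.le_succ k)), hbck]
    · rw [← hpow]; exact Nat.mod_lt _ (Nat.pow_pos (by omega))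
    · rw [← hpow]; exact Nat.mod_lt _ (Nat.pow_pos (by omega))
    · rw [← hpow]; exact Nat.mod_lt _ (Nat.pow_pos (by omega))
    · exact habk1
    · exact hbck1
  have c1 := (consistency f hinj hADJ k a b habk habk1).mp h1
  have c2 := (consistency f hinj hADJ k b c hbck hbck1).mp h2
  rw [hAC] at c1
  exact absurd (lt_trans c1 c2) (lt_irrefl _)
lemma myBtw_dual {X : Type*} [LinearOrder X] (p s q : X) :
    myBtw (X := Xᵒᵈ) (OrderDual.toDual p) (OrderDual.toDual s) (OrderDual.toDual q) ↔
      myBtw p s q := by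
  simp only [myBtw, OrderDual.toDual_lt_toDual]
  tauto

/-- The target gets hit eventually. -/
lemma hit {X : Type*} [LinearOrder X] (f : ℕ → X) (x : X) (hx : ∀ n, f n ≠ x)
    (T m : ℕ) (hT : 0 < T) (hm : m < T)
    (hv : f m < x) (hmax : ∀ j < T, f j < x → f j ≤ f m)
    (hADJ : ∀ n, 0 < n → ∀ j < n, ¬ myBtw (f (par n)) (f j) (f n))
    (hTgt : ∀ n, T ≤ n → ∃ j < n, myBtw (f (par n)) (f j) x) : False := by
  classical
  have clean : ∀ j, ¬ (f m < f j ∧ f j < x) := by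
    by_contra hcl
    push_neg at hcl
    have hex : ∃ j, f m < f j ∧ f j < x := hcl
    have hj0 : f m < f (Nat.find hex) ∧ f (Nat.find hex) < x := Nat.find_spec hex
    set j0 := Nat.find hex with hj0d
    have hmin : ∀ j' < j0, ¬ (f m < f j' ∧ f j' < x) := fun j' h => Nat.find_min hex h
    have hTj : T ≤ j0 := by
      by_contra h
      push_neg at h
      exact absurd (hmax j0 h hj0.2) (not_le.mpr hj0.1)
    have hpos : 0 < j0 := lt_of_lt_of_le hT hTj
    obtain ⟨j1, hj1lt, hj1⟩ := hTgt j0 hTj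
    have hadj := hADJ j0 hpos
    rcases lt_trichotomy (f (par j0)) (f m) with hq | hq | hq
    · exact hadj m (lt_of_lt_of_le hm hTj) (Or.inl ⟨hq, hj0.1⟩)
    · rcases hj1 with ⟨h1, h2⟩ | ⟨h1, h2⟩
      · exact hmin j1 hj1lt ⟨hq ▸ h1, h2⟩
      · rw [hq] at h2
        exact absurd (lt_trans h1 (lt_trans h2 hv)) (lt_irrefl x)
    · rcases lt_trichotomy (f (par j0)) x with hq2 | hq2 | hq2
      · exact hmin (par j0) (par_lt hpos) ⟨hq, hq2⟩
      · exact hx (par j0) hq2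
      · rcases hj1 with ⟨h1, h2⟩ | ⟨h1, h2⟩
        · exact absurd (lt_trans h1 h2) (not_lt.mpr hq2.le)
        · exact hadj j1 hj1lt (Or.inr ⟨lt_trans hj0.2 h1, h2⟩)
  have h2t : m < 2 ^ (T + m) := lt_of_le_of_lt (Nat.le_add_left m T) (Nat.lt_two_pow_self (n := T + m))
  have hpar : par (m + 2 ^ (T + m)) = m := par_eq h2t
  have hTn : T ≤ m + 2 ^ (T + m) :=
    le_trans (le_trans (Nat.le_add_right T m) (Nat.lt_two_pow_self (n := T + m)).le) (Nat.le_add_left _ m)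
  obtain ⟨j, hjn, hj⟩ := hTgt (m + 2 ^ (T + m)) hTn
  rw [hpar] at hj
  rcases hj with ⟨h1, h2⟩ | ⟨h1, h2⟩
  · exact clean j ⟨h1, h2⟩
  · exact absurd (lt_trans h2 hv) (not_lt.mpr h1.le)
/-- Let (X, ⪯) be a countably infinite totally ordered set without isolated
points. Then there exists a binary bijection f : ℕ → X. -/
theorem stmt_13 {X : Type*} [LinearOrder X] [TopologicalSpace X] [OrderTopology X]
    [Countable X] [Infinite X] (hiso : ∀ x : X, ¬ IsOpen ({x} : Set X)) :
    ∃ f : ℕ → X, Function.Bijective f ∧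
      ¬ ∃ a b c : ℕ, f a < f b ∧ f b < f c ∧
        ord2 ((b : ℚ) - (a : ℚ)) = ord2 ((c : ℚ) - (b : ℚ)) := by
  classical
  obtain ⟨e⟩ : Nonempty (ℕ ≃ X) := nonempty_equiv_of_countable
  have tgtex : ∀ S : Finset X, ∃ i : ℕ, e i ∉ S := by
    intro S
    by_contra h
    push_neg at h
    have hsub : (Set.univ : Set X) ⊆ ↑S := by
      intro z _
      have := h (e.symm z)
      simpa using this
    exact Set.infinite_univ (S.finite_toSet.subset hsub)
  set tgt : Finset X → X := fun S => e (Nat.find (tgtex S)) with htgtdef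
  have tgt_not_mem : ∀ S, tgt S ∉ S := fun S => Nat.find_spec (tgtex S)
  have stepEx : ∀ (S : Finset X) (p : X), ∃ y : X, p ∈ S →
      (y ∉ S ∧ myAdj S p y ∧ (myAdj S p (tgt S) → y = tgt S)) := by
    intro S p
    by_cases hp : p ∈ S
    · by_cases ht : myAdj S p (tgt S)
      · exact ⟨tgt S, fun _ => ⟨tgt_not_mem S, ht, fun _ => rfl⟩⟩
      · obtain ⟨y, hy1, hy2⟩ := room hiso S hp
        exact ⟨y, fun _ => ⟨hy1, hy2, fun h => absurd h ht⟩⟩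
    · exact ⟨p, fun h => absurd h hp⟩
  choose pick hpick using stepEx
  obtain ⟨approx, happroxS⟩ : ∃ a : ℕ → ℕ → X, ∀ n, a (n+1) =
      Function.update (a n) (n+1)
        (pick ((Finset.range (n+1)).image (a n)) (a n (par (n+1)))) :=
    ⟨fun n => Nat.rec (fun _ => e 0)
      (fun n g => Function.update g (n+1)
        (pick ((Finset.range (n+1)).image g) (g (par (n+1))))) n, fun n => rfl⟩
  set f : ℕ → X := fun n => approx n n with hf
  have hcoh : ∀ n m, m ≤ n → approx n m = f m := by
    intro n
    induction n with
    | zero => intro m hm; interval_cases m; rfl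
    | succ n ihn =>
      intro m hm
      rcases eq_or_lt_of_le hm with h | h
      · subst h; rfl
      · have hmn : m ≤ n := by omega
        rw [happroxS n, Function.update_of_ne (by omega), ihn m hmn]
  set Sn : ℕ → Finset X := fun n => (Finset.range n).image f with hSn
  have spec : ∀ n, 0 < n → f n ∉ Sn n ∧ myAdj (Sn n) (f (par n)) (f n) ∧
      (myAdj (Sn n) (f (par n)) (tgt (Sn n)) → f n = tgt (Sn n)) := by
    intro n hn
    obtain ⟨n', rfl⟩ : ∃ n', n = n' + 1 := ⟨n - 1, by omega⟩
    have hparlt : par (n' + 1) < n' + 1 := par_lt (Nat.succ_pos n')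
    have himg : (Finset.range (n'+1)).image (approx n') = Sn (n'+1) := by
      apply Finset.image_congr
      intro m hm
      exact hcoh n' m (by simpa [Nat.lt_succ_iff] using hm)
    have hparv : approx n' (par (n'+1)) = f (par (n'+1)) :=
      hcoh n' _ (by omega)
    have hfn : f (n'+1) = pick (Sn (n'+1)) (f (par (n'+1))) := by
      show approx (n'+1) (n'+1) = _
      rw [happroxS n', Function.update_self, himg, hparv]
    have hmem : f (par (n'+1)) ∈ Sn (n'+1) :=
      Finset.mem_image.mpr ⟨par (n'+1), Finset.mem_range.mpr hparlt, rfl⟩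
    rw [hfn]
    exact hpick _ _ hmem
  have haux : ∀ a b : ℕ, a < b → f a ≠ f b := by
    intro a b h he
    exact (spec b (by omega)).1 (Finset.mem_image.mpr ⟨a, Finset.mem_range.mpr h, he⟩)
  have hinj : Function.Injective f := by
    intro a b hab
    rcases lt_trichotomy a b with h | h | h
    · exact absurd hab (haux a b h)
    · exact h
    · exact absurd hab.symm (haux b a h)
  have hADJ : ∀ n, 0 < n → ∀ j < n, ¬ myBtw (f (par n)) (f j) (f n) := by
    intro n hn j hj
    exact (spec n hn).2.1 (f j) (Finset.mem_image.mpr ⟨j, Finset.mem_range.mpr hj, rfl⟩)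
  have hsurj' : ∀ i : ℕ, e i ∈ Set.range f := by
    intro i
    induction i using Nat.strong_induction_on with
    | _ i ih =>
      by_contra hxr
      have hx : ∀ n, f n ≠ e i := fun n h => hxr ⟨n, h⟩
      choose wit hwit using ih
      set g : ℕ → ℕ := fun j => if h : j < i then wit j h else 0 with hg
      set T : ℕ := (Finset.range i).sup g + 1 with hT
      have hT0 : 0 < T := Nat.succ_pos _
      have hTmem : ∀ n, T ≤ n → ∀ j, j < i → e j ∈ Sn n := by
        intro n hn j hj
        have h1 : g j ≤ (Finset.range i).sup g := Finset.le_sup (Finset.mem_range.mpr hj)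
        have h2 : wit j hj < n := by
          have : g j = wit j hj := dif_pos hj
          omega
        exact Finset.mem_image.mpr ⟨wit j hj, Finset.mem_range.mpr h2, hwit j hj⟩
      have hxS : ∀ n, e i ∉ Sn n := by
        intro n hmem
        obtain ⟨j, _, hj⟩ := Finset.mem_image.mp hmem
        exact hx j hj
      have htgtn : ∀ n, T ≤ n → tgt (Sn n) = e i := by
        intro n hn
        have hfind : Nat.find (tgtex (Sn n)) = i := by
          rw [Nat.find_eq_iff]
          exact ⟨hxS n, fun j hj => not_not_intro (hTmem n hn j hj)⟩
        show e (Nat.find (tgtex (Sn n))) = e i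
        rw [hfind]
      have hTgt : ∀ n, T ≤ n → ∃ j < n, myBtw (f (par n)) (f j) (e i) := by
        intro n hn
        have h0n : 0 < n := lt_of_lt_of_le hT0 hn
        have h3 := (spec n h0n).2.2
        rw [htgtn n hn] at h3
        by_contra hno
        push_neg at hno
        have hadj : myAdj (Sn n) (f (par n)) (e i) := by
          intro s hs
          obtain ⟨j, hjr, hje⟩ := Finset.mem_image.mp hs
          exact hje ▸ hno j (Finset.mem_range.mp hjr)
        exact hx n (h3 hadj)
      by_cases hbelow : ∃ j, j < T ∧ f j < e i
      · obtain ⟨j0, hj0⟩ := hbelow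
        obtain ⟨m, hmC, hmmax⟩ := Finset.exists_max_image
          ((Finset.range T).filter (fun j => f j < e i)) f
          ⟨j0, Finset.mem_filter.mpr ⟨Finset.mem_range.mpr hj0.1, hj0.2⟩⟩
        have hmT : m < T := Finset.mem_range.mp (Finset.mem_filter.mp hmC).1
        have hmv : f m < e i := (Finset.mem_filter.mp hmC).2
        exact hit f (e i) hx T m hT0 hmT hmv
          (fun j hj hjv => hmmax j (Finset.mem_filter.mpr ⟨Finset.mem_range.mpr hj, hjv⟩))
          hADJ hTgt
      · push_neg at hbelow
        have habove : ∀ j, j < T → e i < f j := by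
          intro j hj
          rcases lt_trichotomy (f j) (e i) with h | h | h
          · exact absurd h (not_lt.mpr (hbelow j hj))
          · exact absurd h (hx j)
          · exact h
        obtain ⟨m, hmC, hmmin⟩ := Finset.exists_min_image
          ((Finset.range T).filter (fun j => e i < f j)) f
          ⟨0, Finset.mem_filter.mpr ⟨Finset.mem_range.mpr hT0, habove 0 hT0⟩⟩
        have hmT : m < T := Finset.mem_range.mp (Finset.mem_filter.mp hmC).1
        have hmv : e i < f m := (Finset.mem_filter.mp hmC).2
        refine hit (X := Xᵒᵈ) (fun n => OrderDual.toDual (f n)) (OrderDual.toDual (e i))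
          (fun n h => hx n (by exact_mod_cast h)) T m hT0 hmT
          (by exact_mod_cast hmv) ?_ ?_ ?_
        · intro j hj hjv
          exact hmmin j (Finset.mem_filter.mpr ⟨Finset.mem_range.mpr hj, by exact_mod_cast hjv⟩)
        · intro n hn j hj hbtw
          exact hADJ n hn j hj ((myBtw_dual _ _ _).mp hbtw)
        · intro n hn
          obtain ⟨j, hjn, hj⟩ := hTgt n hn
          exact ⟨j, hjn, (myBtw_dual _ _ _).mpr hj⟩
  have hsurj : Function.Surjective f := by
    intro z
    obtain ⟨n, hn⟩ := hsurj' (e.symm z)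
    exact ⟨n, by simpa using hn⟩
  exact ⟨f, ⟨hinj, hsurj⟩, binary_of_adj f hinj hADJ⟩
end
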